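/- arXiv:1410.0428 — 8 statements merged into one kernel-verified Lean document; each statement's English description precedes it below -/
import Mathlib

section
/- Let X be a topological space with a Borel probability measure μ, Y a metric space, f : X → Y a Borel measurable map, and c ∈ Y a point. Then d_P(f_*μ, δ_c) = d_KF(f, c), where δ_c is the Dirac measure at c and the right-hand side is the Ky Fan distance between f and the constant map c. -/
open MeasureTheory

/-- The Ky Fan distance between two measurable maps `f g : X → Y`. -/
noncomputable def kyFanDist {X Y : Type*} [MeasurableSpace X] [PseudoMetricSpace Y]
    (μ : Measure X) (f g : X → Y) : ℝ :=
  sInf {ε : ℝ | 0 ≤ ε ∧ μ {x | ε < dist (f x) (g x)} ≤ ENNReal.ofReal ε}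

/-- The Prohorov distance between Borel probability measures on a metric space `Y`. -/
noncomputable def prohorovDist {Y : Type*} [PseudoMetricSpace Y] [MeasurableSpace Y]
    (μ ν : Measure Y) : ℝ :=
  sInf {ε : ℝ | 0 < ε ∧ ∀ A : Set Y, MeasurableSet A →
    ν A ≤ μ (Metric.thickening ε A) + ENNReal.ofReal ε}

/-- for a Borel measurable map `f : X → Y` and a point `c ∈ Y`,
`d_P (f_*μ, δ_c) = d_KF (f, const c)`. -/
theorem prohorovDist_map_dirac_eq_kyFanDist {X Y : Type*}
    [TopologicalSpace X] [MeasurableSpace X] [BorelSpace X]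
    [MetricSpace Y] [MeasurableSpace Y] [BorelSpace Y]
    (μ : Measure X) [IsProbabilityMeasure μ]
    (f : X → Y) (hf : Measurable f) (c : Y) :
    prohorovDist (Measure.map f μ) (Measure.dirac c) = kyFanDist μ f (fun _ => c) := by
  classical
  have hνmeas : ∀ s : Set Y, MeasurableSet s → Measure.map f μ s = μ (f ⁻¹' s) :=
    fun s hs => Measure.map_apply hf hs
  have hmeaslt : ∀ ε : ℝ, MeasurableSet {x | dist (f x) c < ε} :=
    fun ε => measurableSet_lt (((continuous_id.dist continuous_const).measurable).comp hf) measurable_const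
  set K : Set ℝ := {ε : ℝ | 0 ≤ ε ∧ μ {x | ε < dist (f x) c} ≤ ENNReal.ofReal ε} with hKdef
  set P : Set ℝ := {ε : ℝ | 0 < ε ∧ ∀ A : Set Y, MeasurableSet A →
    Measure.dirac c A ≤ Measure.map f μ (Metric.thickening ε A) + ENNReal.ofReal ε} with hPdef
  have hgoal : prohorovDist (Measure.map f μ) (Measure.dirac c) = sInf P := rfl
  have hgoal2 : kyFanDist μ f (fun _ => c) = sInf K := rfl
  rw [hgoal, hgoal2]
  -- P ⊆ K
  have hPK : P ⊆ K := by
    intro ε hε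
    obtain ⟨hε0, h⟩ := hε
    have h1 := h {c} (measurableSet_singleton c)
    rw [Measure.dirac_apply_of_mem (show c ∈ ({c} : Set Y) from rfl), Metric.thickening_singleton,
      hνmeas _ measurableSet_ball] at h1
    have hpre : f ⁻¹' Metric.ball c ε = {x | dist (f x) c < ε} := rfl
    rw [hpre] at h1
    refine ⟨hε0.le, ?_⟩
    have hc : μ ({x | dist (f x) c < ε}ᶜ) ≤ ENNReal.ofReal ε := by
      rw [measure_compl (hmeaslt ε) (measure_ne_top _ _), measure_univ, tsub_le_iff_right]
      rwa [add_comm]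
    refine le_trans (measure_mono ?_) hc
    intro x hx
    simp only [Set.mem_setOf_eq, Set.mem_compl_iff, not_lt] at hx ⊢
    exact le_of_lt hx
  -- from K, slightly larger ε are in P
  have hKP : ∀ ε ∈ K, ∀ δ : ℝ, 0 < δ → ε + δ ∈ P := by
    intro ε hε δ hδ
    obtain ⟨hε0, hεK⟩ := hε
    refine ⟨by linarith, ?_⟩
    intro A hA
    by_cases hc : c ∈ A
    · rw [Measure.dirac_apply_of_mem hc]
      have hsub : Metric.ball c (ε + δ) ⊆ Metric.thickening (ε + δ) A :=
        Metric.ball_subset_thickening hc _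
      have hb : μ ({x | dist (f x) c < ε + δ}ᶜ) ≤ ENNReal.ofReal (ε + δ) := by
        refine le_trans (measure_mono ?_) (le_trans hεK (ENNReal.ofReal_le_ofReal (by linarith)))
        intro x hx
        simp only [Set.mem_compl_iff, Set.mem_setOf_eq, not_lt] at hx ⊢
        linarith
      have h1 : (1 : ENNReal) ≤ μ {x | dist (f x) c < ε + δ} + ENNReal.ofReal (ε + δ) := by
        have := measure_compl (hmeaslt (ε + δ)) (measure_ne_top μ _)
        rw [measure_univ] at this
        calc (1 : ENNReal) ≤ μ {x | dist (f x) c < ε + δ} + μ ({x | dist (f x) c < ε + δ}ᶜ) := by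
              rw [← measure_univ (μ := μ)]
              exact (measure_union_le _ _).trans_eq' (by rw [Set.union_compl_self])
          _ ≤ _ := add_le_add_right hb _
      refine h1.trans (add_le_add_left ?_ _)
      calc μ {x | dist (f x) c < ε + δ} = Measure.map f μ (Metric.ball c (ε + δ)) := by
            rw [hνmeas _ measurableSet_ball]; rfl
        _ ≤ Measure.map f μ (Metric.thickening (ε + δ) A) := measure_mono hsub
    · rw [Measure.dirac_apply' _ hA, Set.indicator_of_notMem hc]
      exact zero_le
  have hbddP : BddBelow P := ⟨0, fun ε hε => hε.1.le⟩
  have hbddK : BddBelow K := ⟨0, fun ε hε => hε.1⟩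
  have h1K : (1 : ℝ) ∈ K := by
    refine ⟨zero_le_one, ?_⟩
    rw [ENNReal.ofReal_one]
    exact (measure_mono (Set.subset_univ _)).trans_eq measure_univ
  have hKne : K.Nonempty := ⟨1, h1K⟩
  have hPne : P.Nonempty := ⟨1 + 1, hKP 1 h1K 1 one_pos⟩
  refine le_antisymm ?_ (csInf_le_csInf hbddK hPne hPK)
  refine le_csInf hKne ?_
  intro ε hε
  refine le_of_forall_pos_le_add ?_
  intro δ hδ
  exact csInf_le hbddP (hKP ε hε δ hδ)
end

section
/- The Lipschitz order ≺ is a partial order on the set of mm-isomorphism classes of mm-spaces: it is reflexive, transitive, and if X ≺ Y and Y ≺ X then X and Y are mm-isomorphic. -/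
open MeasureTheory Function

lemma lip_selfmap_isometry_surjective {X : Type*} [MetricSpace X] [CompleteSpace X]
    [TopologicalSpace.SeparableSpace X] [MeasurableSpace X] [BorelSpace X] (μ : Measure X) [IsProbabilityMeasure μ]
    [μ.IsOpenPosMeasure] (h : X → X) (hl : LipschitzWith 1 h)
    (hm : Measure.map h μ = μ) : Isometry h ∧ Surjective h := by
  haveI : SecondCountableTopology X := UniformSpace.secondCountable_of_separable X
  have hmeas : Measurable h := hl.continuous.measurable
  have hmp : MeasurePreserving h μ μ := ⟨hmeas, hm⟩
  have hmp2 : MeasurePreserving (Prod.map h h) (μ.prod μ) (μ.prod μ) := hmp.prod hmp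
  -- for each rational q, the bad set is null
  have key : ∀ q : ℚ, (μ.prod μ) {p : X × X | (q : ℝ) ≤ dist p.1 p.2 ∧
      dist (h p.1) (h p.2) < (q : ℝ)} = 0 := by
    intro q
    set D : Set (X × X) := {p | (q : ℝ) ≤ dist p.1 p.2} with hD
    have hDclosed : IsClosed D :=
      isClosed_le continuous_const (continuous_dist.comp
        (continuous_fst.prodMk continuous_snd))
    have hDm : MeasurableSet D := hDclosed.measurableSet
    have hsub : Prod.map h h ⁻¹' D ⊆ D := by
      rintro ⟨x, y⟩ hp
      exact le_trans hp ((hl.dist_le_mul x y).trans (by simp))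
    have heq : (μ.prod μ) (Prod.map h h ⁻¹' D) = (μ.prod μ) D := hmp2.measure_preimage hDm.nullMeasurableSet
    have : (μ.prod μ) (D \ Prod.map h h ⁻¹' D) = 0 := by
      rw [measure_diff hsub (hmp2.measurable hDm).nullMeasurableSet (measure_ne_top _ _), heq,
        tsub_self]
    refine measure_mono_null ?_ this
    rintro ⟨x, y⟩ ⟨h1, h2⟩
    exact ⟨h1, not_le.mpr h2⟩
  have hN : (μ.prod μ) (⋃ q : ℚ, {p : X × X | (q : ℝ) ≤ dist p.1 p.2 ∧
      dist (h p.1) (h p.2) < (q : ℝ)}) = 0 := measure_iUnion_null key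
  -- on the complement, distances are preserved
  have hgood : ∀ p : X × X, p ∉ (⋃ q : ℚ, {p : X × X | (q : ℝ) ≤ dist p.1 p.2 ∧
      dist (h p.1) (h p.2) < (q : ℝ)}) → dist (h p.1) (h p.2) = dist p.1 p.2 := by
    rintro ⟨x, y⟩ hp
    simp only [Set.mem_iUnion, Set.mem_setOf_eq, not_exists, not_and, not_lt] at hp
    refine le_antisymm (by simpa using hl.dist_le_mul x y) ?_
    by_contra hc
    push_neg at hc
    obtain ⟨q, hq1, hq2⟩ := exists_rat_btwn hc
    exact absurd (hp q hq2.le) (not_le.mpr hq1)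
  -- the set where h preserves distances is closed with null complement, hence univ
  set E : Set (X × X) := {p | dist (h p.1) (h p.2) = dist p.1 p.2} with hE
  have hEclosed : IsClosed E := isClosed_eq
    (continuous_dist.comp ((hl.continuous.comp continuous_fst).prodMk
      (hl.continuous.comp continuous_snd)))
    (continuous_dist.comp (continuous_fst.prodMk continuous_snd))
  have hEuniv : E = Set.univ := by
    have hcompl : (μ.prod μ) Eᶜ = 0 := by
      refine measure_mono_null ?_ hN
      intro p hp
      by_contra hnp
      exact hp (hgood p hnp)
    have := hEclosed.isOpen_compl.eq_empty_of_measure_zero hcompl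
    rw [← Set.compl_empty, ← this, compl_compl]
  have hiso : Isometry h := by
    refine Isometry.of_dist_eq fun x y => ?_
    have : (x, y) ∈ E := hEuniv ▸ Set.mem_univ _
    exact this
  refine ⟨hiso, ?_⟩
  -- surjectivity: range is closed and dense
  have hclosed : IsClosed (Set.range h) := hiso.isClosedEmbedding.isClosed_range
  have hdense : (Set.range h)ᶜ = ∅ := by
    refine hclosed.isOpen_compl.eq_empty_of_measure_zero (μ := μ) ?_
    have : μ ((Set.range h)ᶜ) = μ (h ⁻¹' (Set.range h)ᶜ) :=
      (hmp.measure_preimage hclosed.isOpen_compl.measurableSet.nullMeasurableSet).symm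
    rw [this]
    have he : h ⁻¹' (Set.range h)ᶜ = ∅ := by ext x; simp
    rw [he, measure_empty]
  intro y
  have : y ∈ Set.range h := by
    by_contra hy
    rw [Set.eq_empty_iff_forall_notMem] at hdense
    exact hdense y hy
  exact this


/-- `LipDom μX μY` means the mm-space `(X, μX)` Lipschitz dominates `(Y, μY)`,
i.e. `Y ≺ X`: there is a 1-Lipschitz map `f : X → Y` with `f_* μX = μY`. -/
def LipDom {X Y : Type*} [PseudoMetricSpace X] [PseudoMetricSpace Y]
    [MeasurableSpace X] [MeasurableSpace Y] (μX : Measure X) (μY : Measure Y) : Prop :=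
  ∃ f : X → Y, LipschitzWith 1 f ∧ Measure.map f μX = μY

/-- Two mm-spaces (with fully supported measures) are mm-isomorphic if there is a
measure-preserving surjective isometry between them. -/
def MMIsomorphic {X Y : Type*} [PseudoMetricSpace X] [PseudoMetricSpace Y]
    [MeasurableSpace X] [MeasurableSpace Y] (μX : Measure X) (μY : Measure Y) : Prop :=
  ∃ f : X → Y, Isometry f ∧ Function.Surjective f ∧ Measure.map f μX = μY

/-- the Lipschitz order `≺` is a partial order on mm-isomorphism classes
of mm-spaces: reflexive, transitive, and antisymmetric up to mm-isomorphism.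
(Here `Y ≺ X` is `LipDom μX μY`.) -/
theorem lipschitzOrder_partialOrder {X Y Z : Type*}
    [MetricSpace X] [CompleteSpace X] [TopologicalSpace.SeparableSpace X]
    [MeasurableSpace X] [BorelSpace X]
    [MetricSpace Y] [CompleteSpace Y] [TopologicalSpace.SeparableSpace Y]
    [MeasurableSpace Y] [BorelSpace Y]
    [MetricSpace Z] [CompleteSpace Z] [TopologicalSpace.SeparableSpace Z]
    [MeasurableSpace Z] [BorelSpace Z]
    (μX : Measure X) (μY : Measure Y) (μZ : Measure Z)
    [IsProbabilityMeasure μX] [IsProbabilityMeasure μY] [IsProbabilityMeasure μZ]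
    [μX.IsOpenPosMeasure] [μY.IsOpenPosMeasure] [μZ.IsOpenPosMeasure] :
    -- reflexivity: X ≺ X
    LipDom μX μX ∧
    -- transitivity: if X ≺ Y and Y ≺ Z then X ≺ Z
    (LipDom μY μX → LipDom μZ μY → LipDom μZ μX) ∧
    -- antisymmetry: if X ≺ Y and Y ≺ X then X and Y are mm-isomorphic
    (LipDom μY μX → LipDom μX μY → MMIsomorphic μX μY) := by
  refine ⟨⟨id, LipschitzWith.id, Measure.map_id⟩, ?_, ?_⟩
  · rintro ⟨f, hf, hfm⟩ ⟨g, hg, hgm⟩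
    refine ⟨f ∘ g, by simpa using hf.comp hg, ?_⟩
    rw [← Measure.map_map hf.continuous.measurable hg.continuous.measurable, hgm, hfm]
  · rintro ⟨f, hf, hfm⟩ ⟨g, hg, hgm⟩
    -- f : Y → X, f_*μY = μX ; g : X → Y, g_*μX = μY
    have hfg : Measure.map (f ∘ g) μX = μX := by
      rw [← Measure.map_map hf.continuous.measurable hg.continuous.measurable, hgm, hfm]
    have hgf : Measure.map (g ∘ f) μY = μY := by
      rw [← Measure.map_map hg.continuous.measurable hf.continuous.measurable, hfm, hgm]
    obtain ⟨hiso1, -⟩ := lip_selfmap_isometry_surjective μX (f ∘ g)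
      (by simpa using hf.comp hg) hfg
    obtain ⟨-, hsurj2⟩ := lip_selfmap_isometry_surjective μY (g ∘ f)
      (by simpa using hg.comp hf) hgf
    refine ⟨g, Isometry.of_dist_eq fun x y => ?_, fun y => ?_, hgm⟩
    · refine le_antisymm (by simpa using hg.dist_le_mul x y) ?_
      calc dist x y = dist (f (g x)) (f (g y)) := (hiso1.dist_eq x y).symm
        _ ≤ dist (g x) (g y) := by simpa using hf.dist_le_mul (g x) (g y)
    · obtain ⟨z, hz⟩ := hsurj2 y
      exact ⟨f z, hz⟩
end

section
/- Let φ : [0,∞) → [0,∞) be a bounded, continuous, strictly increasing function, and for an mm-space X set Avr_φ(X) := ∫_{X×X} φ(d_X(x,x')) d(μ_X⊗μ_X)(x,x'). If X ≺ Y then Avr_φ(X) ≤ Avr_φ(Y); moreover, if X ≺ Y and Avr_φ(X) = Avr_φ(Y), then X and Y are mm-isomorphic. -/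
open MeasureTheory

/-- `Avr_φ(X) = ∫_{X×X} φ(d_X(x,x')) d(μ_X ⊗ μ_X)`. -/
noncomputable def avr {X : Type*} [PseudoMetricSpace X] [MeasurableSpace X]
    (φ : ℝ → ℝ) (μ : Measure X) : ℝ :=
  ∫ p : X × X, φ (dist p.1 p.2) ∂(μ.prod μ)

/-- for a bounded, continuous, strictly increasing
`φ : [0,∞) → [0,∞)`, if `X ≺ Y` then `Avr_φ(X) ≤ Avr_φ(Y)`, and if in addition
`Avr_φ(X) = Avr_φ(Y)` then `X` and `Y` are mm-isomorphic. -/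
theorem avr_mono_of_lipDom {X Y : Type*}
    [MetricSpace X] [CompleteSpace X] [TopologicalSpace.SeparableSpace X]
    [MeasurableSpace X] [BorelSpace X]
    [MetricSpace Y] [CompleteSpace Y] [TopologicalSpace.SeparableSpace Y]
    [MeasurableSpace Y] [BorelSpace Y]
    (μX : Measure X) (μY : Measure Y)
    [IsProbabilityMeasure μX] [IsProbabilityMeasure μY]
    [μX.IsOpenPosMeasure] [μY.IsOpenPosMeasure]
    (φ : ℝ → ℝ) (hφcont : ContinuousOn φ (Set.Ici 0))
    (hφmono : StrictMonoOn φ (Set.Ici 0))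
    (hφnonneg : ∀ t, 0 ≤ t → 0 ≤ φ t)
    (hφbdd : ∃ C : ℝ, ∀ t, 0 ≤ t → φ t ≤ C)
    (hdom : LipDom μY μX) :
    avr φ μX ≤ avr φ μY ∧ (avr φ μX = avr φ μY → MMIsomorphic μX μY) := by
  obtain ⟨f, hf_lip, hf_map⟩ := hdom
  obtain ⟨C, hC⟩ := hφbdd
  have hf_cont : Continuous f := hf_lip.continuous
  have hf_meas : Measurable f := hf_cont.measurable
  set g : Y × Y → ℝ := fun q => φ (dist (f q.1) (f q.2)) with hgdef
  set h : Y × Y → ℝ := fun q => φ (dist q.1 q.2) with hhdef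
  have hh_cont : Continuous h :=
    hφcont.comp_continuous (continuous_fst.dist continuous_snd) fun q => dist_nonneg
  have hg_cont : Continuous g :=
    hφcont.comp_continuous
      ((hf_cont.comp continuous_fst).dist (hf_cont.comp continuous_snd)) fun q => dist_nonneg
  have hbdd : ∀ (k : Y × Y → ℝ), (∀ q, 0 ≤ k q ∧ k q ≤ C) → Continuous k →
      Integrable k (μY.prod μY) := by
    intro k hk hkc
    refine (integrable_const C).mono' hkc.aestronglyMeasurable (ae_of_all _ fun q => ?_)
    rw [Real.norm_eq_abs, abs_of_nonneg (hk q).1]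
    exact (hk q).2
  have hh_int : Integrable h (μY.prod μY) :=
    hbdd h (fun q => ⟨hφnonneg _ dist_nonneg, hC _ dist_nonneg⟩) hh_cont
  have hg_int : Integrable g (μY.prod μY) :=
    hbdd g (fun q => ⟨hφnonneg _ dist_nonneg, hC _ dist_nonneg⟩) hg_cont
  have hdist_le : ∀ q : Y × Y, dist (f q.1) (f q.2) ≤ dist q.1 q.2 := fun q => by
    simpa using hf_lip.dist_le_mul q.1 q.2
  have key : ∀ q : Y × Y, g q ≤ h q := fun q =>
    hφmono.monotoneOn dist_nonneg dist_nonneg (hdist_le q)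
  have map_prod : Measure.map (Prod.map f f) (μY.prod μY) = μX.prod μX := by
    rw [← Measure.map_prod_map _ _ hf_meas hf_meas, hf_map]
  have hXcont : Continuous fun p : X × X => φ (dist p.1 p.2) :=
    hφcont.comp_continuous (continuous_fst.dist continuous_snd) fun q => dist_nonneg
  have havrX : avr φ μX = ∫ q, g q ∂(μY.prod μY) := by
    rw [avr, ← map_prod, integral_map (hf_meas.prodMap hf_meas).aemeasurable
      hXcont.aestronglyMeasurable]
    rfl
  have havrY : avr φ μY = ∫ q, h q ∂(μY.prod μY) := rfl
  have hle : avr φ μX ≤ avr φ μY := by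
    rw [havrX, havrY]
    exact integral_mono hg_int hh_int key
  refine ⟨hle, fun heq => ?_⟩
  -- equality case
  have hint_eq : ∫ q, g q ∂(μY.prod μY) = ∫ q, h q ∂(μY.prod μY) := by
    rw [← havrX, ← havrY, heq]
  have hsub0 : ∫ q, (h q - g q) ∂(μY.prod μY) = 0 := by
    rw [integral_sub hh_int hg_int, hint_eq, sub_self]
  have hae0 : (fun q => h q - g q) =ᵐ[μY.prod μY] 0 :=
    (integral_eq_zero_iff_of_nonneg (fun q => sub_nonneg.2 (key q))
      (hh_int.sub hg_int)).1 hsub0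
  have hae_dist : (fun q : Y × Y => dist (f q.1) (f q.2)) =ᵐ[μY.prod μY]
      fun q => dist q.1 q.2 := by
    filter_upwards [hae0] with q hq
    have hφeq : φ (dist (f q.1) (f q.2)) = φ (dist q.1 q.2) := by
      have : h q = g q := by linarith [sub_eq_zero.1 hq]
      simpa [hgdef, hhdef] using this.symm
    exact hφmono.injOn dist_nonneg dist_nonneg hφeq
  have hdist_eq : (fun q : Y × Y => dist (f q.1) (f q.2)) = fun q => dist q.1 q.2 :=
    (Continuous.ae_eq_iff_eq (μY.prod μY)
      ((hf_cont.comp continuous_fst).dist (hf_cont.comp continuous_snd))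
      (continuous_fst.dist continuous_snd)).1 hae_dist
  have hf_isom : Isometry f := Isometry.of_dist_eq fun a b => congrFun hdist_eq (a, b)
  have hclosed : IsClosed (Set.range f) := hf_isom.isClosedEmbedding.isClosed_range
  have hsurj : Function.Surjective f := by
    rw [← Set.range_eq_univ]
    by_contra hne
    have hopen : IsOpen (Set.range f)ᶜ := hclosed.isOpen_compl
    have hnonempty : (Set.range f)ᶜ.Nonempty := by
      rw [Set.nonempty_compl]
      exact hne
    have hpos := hopen.measure_pos μX hnonempty
    have : μX (Set.range f)ᶜ = 0 := by
      rw [← hf_map, Measure.map_apply hf_meas hclosed.measurableSet.compl]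
      simp
    simp [this] at hpos
  let e : Y ≃ᵢ X := ⟨Equiv.ofBijective f ⟨hf_isom.injective, hsurj⟩, hf_isom⟩
  refine ⟨e.symm, e.symm.isometry, e.symm.surjective, ?_⟩
  rw [← hf_map, Measure.map_map e.symm.continuous.measurable hf_meas]
  have hid : (⇑e.symm ∘ f) = id := funext fun y => e.symm_apply_apply y
  rw [hid, Measure.map_id]
end

section
/- Let X be an mm-space, κ > 0, and N a natural number. Then the κN-observable diameter of X with screen (ℝ^N, ℓ∞) satisfies ObsDiam_{(ℝ^N,‖·‖_∞)}(X; −Nκ) ≤ ObsDiam(X; −κ). -/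
open MeasureTheory
open scoped ENNReal

/-- The partial diameter `diam(ν; a)` of a Borel measure on a metric space. -/
noncomputable def partialDiam {α : Type*} [PseudoEMetricSpace α] [MeasurableSpace α]
    (ν : Measure α) (a : ℝ) : ℝ≥0∞ :=
  ⨅ (A : Set α) (_ : MeasurableSet A) (_ : ENNReal.ofReal a ≤ ν A), EMetric.diam A

/-- The `κ`-observable diameter of `X` with screen `Y`:
`ObsDiam_Y(X; −κ) = sup {diam (F_*μ_X; 1−κ) : F : X → Y 1-Lipschitz}`. -/
noncomputable def obsDiamScreen (Y : Type*) {X : Type*} [PseudoMetricSpace X]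
    [MeasurableSpace X] [PseudoMetricSpace Y] [MeasurableSpace Y]
    (μ : Measure X) (κ : ℝ) : ℝ≥0∞ :=
  ⨆ (F : X → Y) (_ : LipschitzWith 1 F), partialDiam (Measure.map F μ) (1 - κ)

/-- for an mm-space `X`, `κ > 0` and `N : ℕ`, the `Nκ`-observable
diameter of `X` with screen `(ℝ^N, ℓ∞)` (the sup metric on `Fin N → ℝ`) is at most
the `κ`-observable diameter of `X` (with screen `ℝ`). -/
theorem obsDiam_linfty_le_obsDiam {X : Type*}
    [MetricSpace X] [CompleteSpace X] [TopologicalSpace.SeparableSpace X]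
    [MeasurableSpace X] [BorelSpace X]
    (μ : Measure X) [IsProbabilityMeasure μ] [μ.IsOpenPosMeasure]
    (κ : ℝ) (hκ : 0 < κ) (N : ℕ) :
    obsDiamScreen (Fin N → ℝ) μ (N * κ) ≤ obsDiamScreen ℝ μ κ := by
  set D := obsDiamScreen ℝ μ κ with hD
  rw [obsDiamScreen]
  refine iSup_le fun F => iSup_le fun hF => ?_
  -- each coordinate is 1-Lipschitz
  have hFi : ∀ i : Fin N, LipschitzWith 1 (fun x => F x i) := by
    intro i
    intro x y
    exact le_trans (edist_le_pi_edist (F x) (F y) i) (hF x y)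
  have hFim : ∀ i : Fin N, Measurable (fun x => F x i) := fun i =>
    (hFi i).continuous.measurable
  have hFm : Measurable F := measurable_pi_iff.mpr hFim
  refine ENNReal.le_of_forall_pos_le_add fun ε hε hDlt => ?_
  -- each coordinate's partial diameter is at most D
  have hcoord : ∀ i : Fin N,
      partialDiam (Measure.map (fun x => F x i) μ) (1 - κ) < D + ε := fun i =>
    lt_of_le_of_lt
      (le_iSup₂ (f := fun (f : X → ℝ) (_ : LipschitzWith 1 f) =>
        partialDiam (Measure.map f μ) (1 - κ)) (fun x => F x i) (hFi i))
      (by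
        have : (0 : ℝ≥0∞) < ε := by exact_mod_cast hε
        exact lt_of_lt_of_le (ENNReal.lt_add_right hDlt.ne (by exact_mod_cast hε.ne')) le_rfl)
  -- choose good sets for each coordinate
  have hchoice : ∀ i : Fin N, ∃ A : Set ℝ, MeasurableSet A ∧
      ENNReal.ofReal (1 - κ) ≤ Measure.map (fun x => F x i) μ A ∧
      EMetric.diam A < D + ε := by
    intro i
    have h := hcoord i
    rw [partialDiam] at h
    simp only [iInf_lt_iff] at h
    obtain ⟨A, hA1, hA2, hA3⟩ := h
    exact ⟨A, hA1, hA2, hA3⟩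
  choose A hAmeas hAmeasure hAdiam using hchoice
  set B : Set (Fin N → ℝ) := Set.univ.pi A with hBdef
  have hBmeas : MeasurableSet B := MeasurableSet.univ_pi hAmeas
  -- preimage of B
  have hpre : F ⁻¹' B = ⋂ i, (fun x => F x i) ⁻¹' (A i) := by
    ext x
    simp [hBdef, Set.mem_pi]
  -- measure bound on each coordinate preimage complement
  have hcompl : ∀ i : Fin N, μ ((fun x => F x i) ⁻¹' (A i))ᶜ ≤ ENNReal.ofReal κ := by
    intro i
    have hmap : Measure.map (fun x => F x i) μ (A i) = μ ((fun x => F x i) ⁻¹' (A i)) :=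
      Measure.map_apply (hFim i) (hAmeas i)
    have h1 : ENNReal.ofReal (1 - κ) ≤ μ ((fun x => F x i) ⁻¹' (A i)) := by
      rw [← hmap]; exact hAmeasure i
    rw [measure_compl ((hAmeas i).preimage (hFim i)) (measure_ne_top μ _)]
    rw [measure_univ]
    rw [tsub_le_iff_right]
    calc (1 : ℝ≥0∞) = ENNReal.ofReal (κ + (1 - κ)) := by norm_num
      _ ≤ ENNReal.ofReal κ + ENNReal.ofReal (1 - κ) := ENNReal.ofReal_add_le
      _ ≤ ENNReal.ofReal κ + μ ((fun x => F x i) ⁻¹' (A i)) := by gcongr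
  -- measure bound on B
  have hBmeasure : ENNReal.ofReal (1 - N * κ) ≤ Measure.map F μ B := by
    rw [Measure.map_apply hFm hBmeas, hpre]
    have hcomplU : μ (⋂ i, (fun x => F x i) ⁻¹' (A i))ᶜ ≤ ENNReal.ofReal (N * κ) := by
      rw [Set.compl_iInter]
      calc μ (⋃ i, ((fun x => F x i) ⁻¹' (A i))ᶜ)
          ≤ ∑ i : Fin N, μ ((fun x => F x i) ⁻¹' (A i))ᶜ := measure_iUnion_fintype_le _ _
        _ ≤ ∑ _i : Fin N, ENNReal.ofReal κ := Finset.sum_le_sum fun i _ => hcompl i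
        _ = N * ENNReal.ofReal κ := by simp [mul_comm]
        _ = ENNReal.ofReal (N * κ) := by
            rw [ENNReal.ofReal_mul (by positivity)]
            simp
    have hmeasInter : MeasurableSet (⋂ i, (fun x => F x i) ⁻¹' (A i)) :=
      MeasurableSet.iInter fun i => (hAmeas i).preimage (hFim i)
    have := measure_compl hmeasInter (measure_ne_top μ _)
    have hμI : μ (⋂ i, (fun x => F x i) ⁻¹' (A i))
        = 1 - μ (⋂ i, (fun x => F x i) ⁻¹' (A i))ᶜ := by
      rw [this, measure_univ]
      rw [ENNReal.sub_sub_cancel ENNReal.one_ne_top (prob_le_one)]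
    rw [hμI]
    calc ENNReal.ofReal (1 - N * κ)
        = 1 - ENNReal.ofReal (N * κ) := by
          rw [ENNReal.ofReal_sub 1 (by positivity)]; simp
      _ ≤ 1 - μ (⋂ i, (fun x => F x i) ⁻¹' (A i))ᶜ := tsub_le_tsub_left hcomplU 1
  -- diameter bound on B
  have hBdiam : EMetric.diam B ≤ D + ε := by
    refine EMetric.diam_le fun x hx y hy => ?_
    rw [edist_pi_le_iff]
    intro i
    have hxA : x i ∈ A i := hx i (Set.mem_univ i)
    have hyA : y i ∈ A i := hy i (Set.mem_univ i)
    exact le_trans (EMetric.edist_le_diam_of_mem hxA hyA) (hAdiam i).le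
  -- conclude
  rw [partialDiam]
  exact le_trans (iInf_le_of_le B (iInf_le_of_le hBmeas (iInf_le_of_le hBmeasure le_rfl)))
    hBdiam
end

section
/- For any mm-space X and real numbers κ > κ' > 0: (1) ObsDiam(X; −2κ) ≤ Sep(X; κ, κ), and (2) Sep(X; κ, κ) ≤ ObsDiam(X; −κ'). -/
open MeasureTheory
open scoped ENNReal

/-- The distance `d_X(A, B) = inf {d(x, y) : x ∈ A, y ∈ B}` between two subsets,
valued in `[0, ∞]`. -/
noncomputable def setSep {X : Type*} [PseudoEMetricSpace X] (A B : Set X) : ℝ≥0∞ :=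
  ⨅ (x ∈ A) (y ∈ B), edist x y

/-- The separation distance `Sep(X; κ₀, κ₁)`: the supremum of `d_X(A₀, A₁)` over
Borel sets `A₀, A₁` with `μ(Aᵢ) ≥ κᵢ` (and `0` if no such sets exist). -/
noncomputable def sep2 {X : Type*} [PseudoEMetricSpace X] [MeasurableSpace X]
    (μ : Measure X) (κ₀ κ₁ : ℝ) : ℝ≥0∞ :=
  ⨆ (A₀ : Set X) (A₁ : Set X) (_ : MeasurableSet A₀) (_ : MeasurableSet A₁)
    (_ : ENNReal.ofReal κ₀ ≤ μ A₀) (_ : ENNReal.ofReal κ₁ ≤ μ A₁), setSep A₀ A₁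

/-- The `κ`-observable diameter `ObsDiam(X; −κ)`. -/
noncomputable def obsDiam {X : Type*} [PseudoMetricSpace X] [MeasurableSpace X]
    (μ : Measure X) (κ : ℝ) : ℝ≥0∞ :=
  ⨆ (f : X → ℝ) (_ : LipschitzWith 1 f), partialDiam (Measure.map f μ) (1 - κ)

lemma partialDiam_le {α : Type*} [PseudoEMetricSpace α] [MeasurableSpace α]
    {ν : Measure α} {a : ℝ} {A : Set α} (hA : MeasurableSet A)
    (h : ENNReal.ofReal a ≤ ν A) : partialDiam ν a ≤ EMetric.diam A :=
  iInf_le_of_le A (iInf_le_of_le hA (iInf_le _ h))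

lemma le_sep2 {X : Type*} [PseudoEMetricSpace X] [MeasurableSpace X]
    {μ : Measure X} {κ₀ κ₁ : ℝ} {A₀ A₁ : Set X} (h₀ : MeasurableSet A₀) (h₁ : MeasurableSet A₁)
    (hm₀ : ENNReal.ofReal κ₀ ≤ μ A₀) (hm₁ : ENNReal.ofReal κ₁ ≤ μ A₁) :
    setSep A₀ A₁ ≤ sep2 μ κ₀ κ₁ :=
  le_iSup_of_le A₀ (le_iSup_of_le A₁ (le_iSup_of_le h₀ (le_iSup_of_le h₁
    (le_iSup_of_le hm₀ (le_iSup_of_le hm₁ le_rfl)))))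

/-- A "quantile" point for a probability measure on `ℝ`. -/
lemma exists_median_pt (ν : Measure ℝ) [IsProbabilityMeasure ν] {κ : ℝ}
    (h0 : 0 < κ) (h1 : κ < 1) :
    ∃ a : ℝ, ENNReal.ofReal κ ≤ ν (Set.Iic a) ∧ ν (Set.Iio a) ≤ ENNReal.ofReal κ := by
  set c := ENNReal.ofReal κ with hc
  have hc0 : 0 < c := ENNReal.ofReal_pos.mpr h0
  have hc1 : c < 1 := by
    rw [hc, ← ENNReal.ofReal_one]
    exact (ENNReal.ofReal_lt_ofReal_iff one_pos).mpr h1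
  set S := {t : ℝ | c ≤ ν (Set.Iic t)} with hSdef
  have hS_up : ∀ {s t : ℝ}, s ∈ S → s ≤ t → t ∈ S := fun hs hst =>
    le_trans hs (measure_mono (Set.Iic_subset_Iic.mpr hst))
  have hS_ne : S.Nonempty := by
    have ht : Filter.Tendsto (fun t : ℝ => ν (Set.Iic t)) Filter.atTop (nhds (ν Set.univ)) :=
      tendsto_measure_Iic_atTop ν
    rw [measure_univ] at ht
    obtain ⟨t, ht⟩ := (ht.eventually_const_lt hc1).exists
    exact ⟨t, ht.le⟩
  have hS_bdd : BddBelow S := by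
    have hempty : (⋂ t : ℝ, Set.Iic t) = ∅ := by
      ext x
      simp only [Set.mem_iInter, Set.mem_Iic, Set.mem_empty_iff_false, iff_false, not_forall,
        not_le]
      exact ⟨x - 1, by linarith⟩
    have ht : Filter.Tendsto (fun t : ℝ => ν (Set.Iic t)) Filter.atBot (nhds 0) := by
      have := tendsto_measure_iInter_atBot (μ := ν) (s := fun t : ℝ => Set.Iic t)
        (fun t => measurableSet_Iic.nullMeasurableSet)
        (fun s t hst => Set.Iic_subset_Iic.mpr hst) ⟨0, measure_ne_top ν _⟩
      rwa [hempty, measure_empty] at this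
    obtain ⟨t₀, ht₀⟩ := Filter.eventually_atBot.mp (ht.eventually_lt_const hc0)
    refine ⟨t₀, fun s hs => ?_⟩
    by_contra hst
    push_neg at hst
    exact absurd hs (not_le.mpr (ht₀ s hst.le))
  set a := sInf S with ha
  refine ⟨a, ?_, ?_⟩
  · have heq : Set.Iic a = ⋂ n : ℕ, Set.Iic (a + ((n : ℝ) + 1)⁻¹) := by
      ext x
      simp only [Set.mem_iInter, Set.mem_Iic]
      constructor
      · intro hx n
        have : (0 : ℝ) < ((n : ℝ) + 1)⁻¹ := by positivity
        linarith
      · intro h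
        by_contra hx
        push_neg at hx
        obtain ⟨n, hn⟩ := exists_nat_one_div_lt (sub_pos.mpr hx)
        have := h n
        rw [one_div] at hn
        linarith
    rw [heq]
    rw [Directed.measure_iInter (fun n => measurableSet_Iic.nullMeasurableSet) ?_
      ⟨0, measure_ne_top ν _⟩]
    · refine le_iInf fun n => ?_
      have hpos : (0 : ℝ) < ((n : ℝ) + 1)⁻¹ := by positivity
      have : a < a + ((n : ℝ) + 1)⁻¹ := by linarith
      obtain ⟨s, hsS, hs⟩ := (csInf_lt_iff hS_bdd hS_ne).mp this
      exact hS_up hsS hs.le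
    · have mono : Antitone fun n : ℕ => Set.Iic (a + ((n : ℝ) + 1)⁻¹) := by
        intro m n hmn
        apply Set.Iic_subset_Iic.mpr
        have hmn' : (m : ℝ) ≤ n := Nat.cast_le.mpr hmn
        have : ((n : ℝ) + 1)⁻¹ ≤ ((m : ℝ) + 1)⁻¹ := by
          apply inv_anti₀ (by positivity)
          linarith
        linarith
      exact mono.directed_ge
  · have heq : Set.Iio a = ⋃ n : ℕ, Set.Iic (a - ((n : ℝ) + 1)⁻¹) := by
      ext x
      simp only [Set.mem_iUnion, Set.mem_Iio, Set.mem_Iic]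
      constructor
      · intro hx
        obtain ⟨n, hn⟩ := exists_nat_one_div_lt (sub_pos.mpr hx)
        rw [one_div] at hn
        exact ⟨n, by linarith⟩
      · intro ⟨n, hn⟩
        have hpos : (0 : ℝ) < ((n : ℝ) + 1)⁻¹ := by positivity
        linarith
    rw [heq]
    have mono : Monotone fun n : ℕ => Set.Iic (a - ((n : ℝ) + 1)⁻¹) := by
      intro m n hmn
      apply Set.Iic_subset_Iic.mpr
      have hmn' : (m : ℝ) ≤ n := Nat.cast_le.mpr hmn
      have : ((n : ℝ) + 1)⁻¹ ≤ ((m : ℝ) + 1)⁻¹ := by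
        apply inv_anti₀ (by positivity)
        linarith
      linarith
    rw [Directed.measure_iUnion mono.directed_le]
    refine iSup_le fun n => ?_
    have hpos : (0 : ℝ) < ((n : ℝ) + 1)⁻¹ := by positivity
    have hnot : a - ((n : ℝ) + 1)⁻¹ ∉ S := by
      intro hmem
      have := csInf_le hS_bdd hmem
      rw [← ha] at this
      linarith
    have hnot' : ¬ c ≤ ν (Set.Iic (a - ((n : ℝ) + 1)⁻¹)) := hnot
    exact (not_le.mp hnot').le
  
lemma exists_median_pt' (ν : Measure ℝ) [IsProbabilityMeasure ν] {κ : ℝ}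
    (h0 : 0 < κ) (h1 : κ < 1) :
    ∃ b : ℝ, ENNReal.ofReal κ ≤ ν (Set.Ici b) ∧ ν (Set.Ioi b) ≤ ENNReal.ofReal κ := by
  have : IsProbabilityMeasure (ν.map Neg.neg) :=
    Measure.isProbabilityMeasure_map measurable_neg.aemeasurable
  obtain ⟨a, ha1, ha2⟩ := exists_median_pt (ν.map Neg.neg) h0 h1
  rw [Measure.map_apply measurable_neg measurableSet_Iic] at ha1
  rw [Measure.map_apply measurable_neg measurableSet_Iio] at ha2
  have h1' : Neg.neg ⁻¹' Set.Iic a = Set.Ici (-a) := by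
    ext x; simp [neg_le]
  have h2' : Neg.neg ⁻¹' Set.Iio a = Set.Ioi (-a) := by
    ext x; simp [neg_lt]
  rw [h1'] at ha1
  rw [h2'] at ha2
  exact ⟨-a, ha1, ha2⟩

/-- for any mm-space `X` and reals `κ > κ' > 0`:
(1) `ObsDiam(X; −2κ) ≤ Sep(X; κ, κ)`; (2) `Sep(X; κ, κ) ≤ ObsDiam(X; −κ')`. -/
theorem obsDiam_sep_obsDiam {X : Type*}
    [MetricSpace X] [CompleteSpace X] [TopologicalSpace.SeparableSpace X]
    [MeasurableSpace X] [BorelSpace X]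
    (μ : Measure X) [IsProbabilityMeasure μ] [μ.IsOpenPosMeasure]
    (κ κ' : ℝ) (hκ' : 0 < κ') (hκ : κ' < κ) :
    obsDiam μ (2 * κ) ≤ sep2 μ κ κ ∧ sep2 μ κ κ ≤ obsDiam μ κ' := by
  have hκ0 : 0 < κ := lt_trans hκ' hκ
  constructor
  · -- ObsDiam(X; −2κ) ≤ Sep(X; κ, κ)
    refine iSup_le fun f => iSup_le fun hf => ?_
    have hfm : Measurable f := hf.continuous.measurable
    set ν := Measure.map f μ with hν
    have : IsProbabilityMeasure ν := Measure.isProbabilityMeasure_map hfm.aemeasurable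
    by_cases hhalf : 1 - 2 * κ ≤ 0
    · refine le_trans (partialDiam_le MeasurableSet.empty ?_) ?_
      · simp [ENNReal.ofReal_eq_zero.mpr hhalf]
      · simp [EMetric.diam]
    · push_neg at hhalf
      have hκ2 : κ < 1 / 2 := by linarith
      obtain ⟨a, ha1, ha2⟩ := exists_median_pt ν hκ0 (by linarith)
      obtain ⟨b, hb1, hb2⟩ := exists_median_pt' ν hκ0 (by linarith)
      have hab : a ≤ b := by
        by_contra hba
        push_neg at hba
        have h2κ : ENNReal.ofReal (2 * κ) < 1 := by
          rw [← ENNReal.ofReal_one]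
          exact (ENNReal.ofReal_lt_ofReal_iff one_pos).mpr (by linarith)
        have : (1 : ℝ≥0∞) ≤ ENNReal.ofReal (2 * κ) := by
          calc (1 : ℝ≥0∞) = ν Set.univ := measure_univ.symm
            _ = ν (Set.Iio a ∪ Set.Ici a) := by rw [Set.Iio_union_Ici]
            _ ≤ ν (Set.Iio a) + ν (Set.Ici a) := measure_union_le _ _
            _ ≤ ν (Set.Iio a) + ν (Set.Ioi b) :=
                add_le_add_right (measure_mono fun x hx => lt_of_lt_of_le hba hx) _
            _ ≤ ENNReal.ofReal κ + ENNReal.ofReal κ := add_le_add ha2 hb2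
            _ = ENNReal.ofReal (2 * κ) := by
                rw [← ENNReal.ofReal_add hκ0.le hκ0.le]; ring_nf
        exact absurd (lt_of_le_of_lt this h2κ) (lt_irrefl _)
      refine le_trans (partialDiam_le (A := Set.Icc a b) measurableSet_Icc ?_) ?_
      · -- ofReal (1 - 2κ) ≤ ν (Icc a b)
        have hcompl : Set.Icc a b = (Set.Iio a ∪ Set.Ioi b)ᶜ := by
          ext x
          simp only [Set.mem_Icc, Set.mem_compl_iff, Set.mem_union, Set.mem_Iio, Set.mem_Ioi,
            not_or, not_lt]
        rw [hcompl, measure_compl (measurableSet_Iio.union measurableSet_Ioi)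
          (measure_ne_top ν _), measure_univ]
        have hle : ν (Set.Iio a ∪ Set.Ioi b) ≤ ENNReal.ofReal (2 * κ) := by
          calc ν (Set.Iio a ∪ Set.Ioi b) ≤ ν (Set.Iio a) + ν (Set.Ioi b) := measure_union_le _ _
            _ ≤ ENNReal.ofReal κ + ENNReal.ofReal κ := add_le_add ha2 hb2
            _ = ENNReal.ofReal (2 * κ) := by
                rw [← ENNReal.ofReal_add hκ0.le hκ0.le]; ring_nf
        calc ENNReal.ofReal (1 - 2 * κ) = 1 - ENNReal.ofReal (2 * κ) := by
              rw [ENNReal.ofReal_sub _ (by positivity), ENNReal.ofReal_one]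
          _ ≤ 1 - ν (Set.Iio a ∪ Set.Ioi b) := tsub_le_tsub_left hle 1
      · -- diam (Icc a b) ≤ sep2
        rw [EMetric.diam, Real.ediam_Icc]
        have hm₀ : ENNReal.ofReal κ ≤ μ (f ⁻¹' Set.Iic a) := by
          rwa [← Measure.map_apply hfm measurableSet_Iic]
        have hm₁ : ENNReal.ofReal κ ≤ μ (f ⁻¹' Set.Ici b) := by
          rwa [← Measure.map_apply hfm measurableSet_Ici]
        refine le_trans ?_ (le_sep2 (hfm measurableSet_Iic) (hfm measurableSet_Ici) hm₀ hm₁)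
        refine le_iInf₂ fun x hx => le_iInf₂ fun y hy => ?_
        have h1 : edist (f x) (f y) ≤ edist x y := by
          have h := hf.edist_le_mul x y
          rwa [ENNReal.coe_one, one_mul] at h
        refine le_trans ?_ h1
        rw [edist_dist, Real.dist_eq]
        apply ENNReal.ofReal_le_ofReal
        have hfx : f x ≤ a := hx
        have hfy : b ≤ f y := hy
        have : b - a ≤ f y - f x := by linarith
        calc b - a ≤ f y - f x := this
          _ ≤ |f y - f x| := le_abs_self _
          _ = |f x - f y| := abs_sub_comm _ _
  · -- Sep(X; κ, κ) ≤ ObsDiam(X; −κ')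
    refine iSup_le fun A₀ => iSup_le fun A₁ => iSup_le fun hA₀ => iSup_le fun hA₁ =>
      iSup_le fun hm₀ => iSup_le fun hm₁ => ?_
    have hA₀ne : A₀.Nonempty := by
      apply nonempty_of_measure_ne_zero (μ := μ)
      intro h
      rw [h] at hm₀
      exact absurd hm₀ (not_le.mpr (ENNReal.ofReal_pos.mpr hκ0))
    set f : X → ℝ := fun x => Metric.infDist x A₀ with hfdef
    have hf : LipschitzWith 1 f := Metric.lipschitz_infDist_pt A₀
    have hfm : Measurable f := hf.continuous.measurable
    have : IsProbabilityMeasure (Measure.map f μ) := Measure.isProbabilityMeasure_map hfm.aemeasurable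
    refine le_trans ?_ (le_iSup_of_le f (le_iSup_of_le hf le_rfl))
    refine le_iInf fun A => le_iInf fun hA => le_iInf fun hνA => ?_
    have hAc : (Measure.map f μ) Aᶜ ≤ ENNReal.ofReal κ' := by
      rw [measure_compl hA (measure_ne_top _ _), measure_univ]
      rcases le_or_gt κ' 1 with h | h
      · have heq : ENNReal.ofReal (1 - κ') = 1 - ENNReal.ofReal κ' := by
          rw [ENNReal.ofReal_sub _ hκ'.le, ENNReal.ofReal_one]
        calc 1 - (Measure.map f μ) A ≤ 1 - ENNReal.ofReal (1 - κ') := tsub_le_tsub_left hνA 1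
          _ = 1 - (1 - ENNReal.ofReal κ') := by rw [heq]
          _ ≤ ENNReal.ofReal κ' := by
              rw [tsub_le_iff_right]
              exact le_add_tsub
      · calc 1 - (Measure.map f μ) A ≤ 1 := tsub_le_self
          _ ≤ ENNReal.ofReal κ' := by
              rw [← ENNReal.ofReal_one]
              exact ENNReal.ofReal_le_ofReal h.le
    have key : ∀ B : Set X, MeasurableSet B → ENNReal.ofReal κ ≤ μ B → ∃ x ∈ B, f x ∈ A := by
      intro B hB hμB
      by_contra h
      push_neg at h
      have hsub : B ⊆ f ⁻¹' Aᶜ := fun x hx => h x hx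
      have hle : ENNReal.ofReal κ ≤ ENNReal.ofReal κ' := by
        calc ENNReal.ofReal κ ≤ μ B := hμB
          _ ≤ μ (f ⁻¹' Aᶜ) := measure_mono hsub
          _ = (Measure.map f μ) Aᶜ := (Measure.map_apply hfm hA.compl).symm
          _ ≤ ENNReal.ofReal κ' := hAc
      exact absurd hle (not_le.mpr ((ENNReal.ofReal_lt_ofReal_iff hκ0).mpr hκ))
    obtain ⟨x₀, hx₀B, hx₀A⟩ := key A₀ hA₀ hm₀
    obtain ⟨x₁, hx₁B, hx₁A⟩ := key A₁ hA₁ hm₁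
    calc setSep A₀ A₁ ≤ EMetric.infEdist x₁ A₀ := by
          rw [EMetric.infEdist]
          refine le_iInf₂ fun y hy => ?_
          exact le_trans (le_trans (iInf₂_le y hy) (iInf₂_le x₁ hx₁B)) (edist_comm y x₁).le
      _ = edist (f x₀) (f x₁) := by
          have h0 : f x₀ = 0 := Metric.infDist_zero_of_mem hx₀B
          rw [h0, edist_dist, Real.dist_eq, zero_sub, abs_neg,
            abs_of_nonneg Metric.infDist_nonneg]
          rw [Metric.infDist, ENNReal.ofReal_toReal (Metric.infEdist_ne_top hA₀ne)]
          rfl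
      _ ≤ EMetric.diam A := EMetric.edist_le_diam_of_mem hx₀A hx₁A
end

section
/- Let X be a compact Riemannian manifold with normalized volume measure, and let λ_k(X) denote the k-th eigenvalue of the Laplacian. Then for any κ₀, κ₁, …, κ_k > 0, Sep(X; κ₀, κ₁, …, κ_k) ≤ 2 / √(λ_k(X) · min_i κ_i). -/
open MeasureTheory Filter
open scoped ENNReal Topology

/-- The pointwise slope (local Lipschitz constant)
`|grad f|(x) = limsup_{y → x, y ≠ x} |f(y) − f(x)| / d(y, x)`. -/
noncomputable def gradNorm {X : Type*} [MetricSpace X] (f : X → ℝ) (x : X) : ℝ :=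
  limsup (fun y => |f y - f x| / dist y x) (𝓝[≠] x)

/-- The Dirichlet energy `E(f) = ∫ |grad f|² dμ`. -/
noncomputable def energy {X : Type*} [MetricSpace X] [MeasurableSpace X]
    (μ : Measure X) (f : X → ℝ) : ℝ :=
  ∫ x, (gradNorm f x) ^ 2 ∂μ

/-- The Rayleigh quotient `R(f) = ‖grad f‖²_{L₂} / ‖f‖²_{L₂}`. -/
noncomputable def rayleigh {X : Type*} [MetricSpace X] [MeasurableSpace X]
    (μ : Measure X) (f : X → ℝ) : ℝ :=
  energy μ f / ∫ x, (f x) ^ 2 ∂μ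

/-- The `k`-th eigenvalue of the Laplacian, via the min-max principle:
`λ_k = inf_L sup {R(u) : u ∈ L \ {0}}` where `L` runs over all
`(k+1)`-dimensional subspaces of `L₂(X) ∩ Lip(X)`. -/
noncomputable def lambdaK {X : Type*} [MetricSpace X] [MeasurableSpace X]
    (μ : Measure X) (k : ℕ) : ℝ :=
  sInf { r : ℝ | ∃ L : Submodule ℝ (X → ℝ),
    Module.finrank ℝ L = k + 1 ∧
    (∀ f ∈ L, (∃ C : NNReal, LipschitzWith C f) ∧ MemLp f 2 μ) ∧
    r = sSup { s : ℝ | ∃ f ∈ L, f ≠ (0 : X → ℝ) ∧ s = rayleigh μ f } }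

/-- The separation distance `Sep(X; κ₀, …, κ_n)`: the supremum of
`min_{i ≠ j} d_X(A_i, A_j)` over Borel sets with `μ(A_i) ≥ κ_i`. -/
noncomputable def sepFam {X : Type*} [PseudoEMetricSpace X] [MeasurableSpace X]
    (μ : Measure X) {n : ℕ} (κ : Fin n → ℝ) : ℝ≥0∞ :=
  ⨆ (A : Fin n → Set X) (_ : ∀ i, MeasurableSet (A i))
    (_ : ∀ i, ENNReal.ofReal (κ i) ≤ μ (A i)),
    ⨅ (i : Fin n) (j : Fin n) (_ : i ≠ j), setSep (A i) (A j)

section Aux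

variable {X : Type*} [MetricSpace X]

/-- The slope of a function satisfying a Lipschitz bound is bounded by the constant. -/
lemma gradNorm_abs_le {f : X → ℝ} {K : ℝ} (hK : 0 ≤ K)
    (hf : ∀ x y, |f x - f y| ≤ K * dist x y) (x : X) : |gradNorm f x| ≤ K := by
  have hub : ∀ y, |f y - f x| / dist y x ≤ K := by
    intro y
    rcases eq_or_ne y x with rfl | hy
    · simp [hK]
    · rw [div_le_iff₀ (dist_pos.2 hy)]
      exact hf y x
  rcases eq_or_neBot (𝓝[≠] x) with h | h
  · rw [gradNorm, h, limsup_eq]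
    simp only [eventually_bot, Set.setOf_true]
    have huniv : sInf (Set.univ : Set ℝ) = 0 := by
      apply Real.sInf_of_not_bddBelow
      rintro ⟨b, hb⟩
      have := hb (Set.mem_univ (b - 1))
      linarith
    rw [huniv, abs_zero]; exact hK
  · have hub' : ∀ᶠ y in 𝓝[≠] x, (fun y => |f y - f x| / dist y x) y ≤ K :=
      Eventually.of_forall hub
    have hlb : ∀ᶠ y in 𝓝[≠] x, (0:ℝ) ≤ (fun y => |f y - f x| / dist y x) y :=
      Eventually.of_forall fun y => div_nonneg (abs_nonneg _) dist_nonneg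
    have h1 : gradNorm f x ≤ K :=
      limsup_le_of_le (isCoboundedUnder_le_of_eventually_le _ hlb) hub'
    have h2 : (0:ℝ) ≤ gradNorm f x :=
      le_limsup_of_frequently_le hlb.frequently ⟨K, eventually_map.2 hub'⟩
    rw [abs_le]; constructor <;> linarith

/-- Energy bound from a Lipschitz bound (probability measure). -/
lemma energy_le_sq [MeasurableSpace X] (μ : Measure X) [IsProbabilityMeasure μ]
    {f : X → ℝ} {K : ℝ} (hK : 0 ≤ K) (hf : ∀ x y, |f x - f y| ≤ K * dist x y) :
    energy μ f ≤ K ^ 2 := by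
  have hpt : ∀ x, gradNorm f x ^ 2 ≤ K ^ 2 := by
    intro x
    have := gradNorm_abs_le hK hf x
    rw [abs_le] at this
    exact sq_le_sq' (by linarith) this.2
  by_cases hi : Integrable (fun x => gradNorm f x ^ 2) μ
  · calc energy μ f ≤ ∫ _, K ^ 2 ∂μ := integral_mono hi (integrable_const _) hpt
      _ = K ^ 2 := by simp
  · rw [energy, integral_undef hi]; positivity

/-- Continuous functions on a compact probability space are in every `ℒp`. -/
lemma memLp_of_continuous [CompactSpace X] [MeasurableSpace X] [BorelSpace X]
    (μ : Measure X) [IsProbabilityMeasure μ] (p : ℝ≥0∞) {f : X → ℝ} (hf : Continuous f) :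
    MemLp f p μ := by
  have hnz : NeZero μ := ⟨by
    intro h
    have h1 := measure_univ (μ := μ)
    rw [h] at h1
    simp at h1⟩
  have hne : Nonempty X := MeasureTheory.Measure.nonempty_of_neZero μ
  obtain ⟨x₀, -, hx₀⟩ := isCompact_univ.exists_isMaxOn Set.univ_nonempty
    ((continuous_abs.comp hf).continuousOn)
  refine MemLp.of_bound hf.aestronglyMeasurable (|f x₀|) (Eventually.of_forall fun x => ?_)
  simpa using hx₀ (Set.mem_univ x)

lemma lambdaK_nonneg [MeasurableSpace X] (μ : Measure X) (k : ℕ) : 0 ≤ lambdaK μ k := by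
  apply Real.sInf_nonneg
  rintro r ⟨L, -, -, rfl⟩
  apply Real.sSup_nonneg
  rintro s ⟨f, -, -, rfl⟩
  exact div_nonneg (integral_nonneg fun x => sq_nonneg _) (integral_nonneg fun x => sq_nonneg _)

/-- The key construction: a family of `δ`-separated sets of measure `≥ κ i ≥ κm`
forces `λ_k ≤ 4 / (δ² κm)`. -/
lemma lambdaK_le_of_sep [CompactSpace X] [MeasurableSpace X] [BorelSpace X]
    (μ : Measure X) [IsProbabilityMeasure μ]
    (k : ℕ) (κ : Fin (k + 1) → ℝ) (hκ : ∀ i, 0 < κ i)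
    (κm : ℝ) (hκm : 0 < κm) (hκm_le : ∀ i, κm ≤ κ i)
    (A : Fin (k + 1) → Set X) (hmeas : ∀ i, MeasurableSet (A i))
    (hAκ : ∀ i, ENNReal.ofReal (κ i) ≤ μ (A i))
    (δ : ℝ) (hδ : 0 < δ)
    (hsep : ∀ i j, i ≠ j → ENNReal.ofReal δ ≤ setSep (A i) (A j)) :
    lambdaK μ k ≤ 4 / (δ ^ 2 * κm) := by
  classical
  have hδ2 : (0:ℝ) < 2 / δ := by positivity
  -- each `A i` is nonempty
  have hne : ∀ i, (A i).Nonempty := by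
    intro i
    rcases Set.eq_empty_or_nonempty (A i) with h | h
    · exfalso
      have h1 : (0:ℝ≥0∞) < ENNReal.ofReal (κ i) := ENNReal.ofReal_pos.2 (hκ i)
      have h2 := hAκ i
      rw [h, measure_empty] at h2
      exact absurd (le_antisymm h2 (by positivity)) (ne_of_gt h1)
    · exact h
  -- points of distinct sets are `δ`-far
  have hdist : ∀ i j, i ≠ j → ∀ x ∈ A i, ∀ y ∈ A j, δ ≤ dist x y := by
    intro i j hij x hx y hy
    have h1 : setSep (A i) (A j) ≤ edist x y := by
      apply iInf_le_of_le x
      apply iInf_le_of_le hx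
      apply iInf_le_of_le y
      exact iInf_le _ hy
    have h2 : ENNReal.ofReal δ ≤ edist x y := le_trans (hsep i j hij) h1
    rw [edist_dist] at h2
    exact (ENNReal.ofReal_le_ofReal_iff dist_nonneg).1 h2
  -- a point cannot be `< δ/2`-close to two distinct sets
  have hfar : ∀ i j, i ≠ j → ∀ x : X,
      Metric.infDist x (A i) < δ / 2 → δ / 2 ≤ Metric.infDist x (A j) := by
    intro i j hij x hxi
    by_contra h
    push_neg at h
    obtain ⟨p, hp, hpd⟩ := (Metric.infDist_lt_iff (hne i)).1 hxi
    obtain ⟨q, hq, hqd⟩ := (Metric.infDist_lt_iff (hne j)).1 h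
    have h1 := hdist i j hij p hp q hq
    have h2 : dist p q ≤ dist p x + dist x q := dist_triangle p x q
    rw [dist_comm p x] at h2
    have h3 : dist q x = dist x q := dist_comm q x
    linarith
  -- the test functions
  set F : Fin (k + 1) → X → ℝ :=
    fun i x => max (1 - 2 / δ * Metric.infDist x (A i)) 0 with hF
  have hFdef : ∀ i x, F i x = max (1 - 2 / δ * Metric.infDist x (A i)) 0 := fun i x => rfl
  have hFcont : ∀ i, Continuous (F i) := fun i =>
    ((continuous_const.sub (continuous_const.mul
      (Metric.continuous_infDist_pt (A i)))).max continuous_const)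
  have hF0 : ∀ i x, 0 ≤ F i x := fun i x => le_max_right _ _
  have hF1 : ∀ i x, F i x ≤ 1 := by
    intro i x
    apply max_le _ zero_le_one
    have := Metric.infDist_nonneg (x := x) (s := A i)
    nlinarith
  have hFone : ∀ i, ∀ x ∈ A i, F i x = 1 := by
    intro i x hx
    simp [hF, Metric.infDist_zero_of_mem hx]
  have hFz : ∀ i x, δ / 2 ≤ Metric.infDist x (A i) → F i x = 0 := by
    intro i x hx
    apply max_eq_right
    have h1 : 2 / δ * (δ / 2) ≤ 2 / δ * Metric.infDist x (A i) :=
      mul_le_mul_of_nonneg_left hx hδ2.le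
    have h2 : 2 / δ * (δ / 2) = 1 := by field_simp
    linarith
  have hFlip : ∀ i x y, |F i x - F i y| ≤ 2 / δ * dist x y := by
    intro i x y
    have h1 : |F i x - F i y| ≤
        |(1 - 2 / δ * Metric.infDist x (A i)) - (1 - 2 / δ * Metric.infDist y (A i))| := by
      have h := abs_max_sub_max_le_max (1 - 2 / δ * Metric.infDist x (A i)) 0
        (1 - 2 / δ * Metric.infDist y (A i)) 0
      rw [hFdef, hFdef]
      refine h.trans ?_
      rw [sub_zero, abs_zero]
      exact max_le le_rfl (abs_nonneg _)
    have h2 : |Metric.infDist x (A i) - Metric.infDist y (A i)| ≤ dist x y := by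
      rw [abs_sub_le_iff]
      constructor
      · have := Metric.infDist_le_infDist_add_dist (x := x) (y := y) (s := A i)
        linarith
      · have := Metric.infDist_le_infDist_add_dist (x := y) (y := x) (s := A i)
        rw [dist_comm] at this
        linarith
    calc |F i x - F i y| ≤ |2 / δ * (Metric.infDist y (A i) - Metric.infDist x (A i))| := by
          rw [show 2 / δ * (Metric.infDist y (A i) - Metric.infDist x (A i)) =
            (1 - 2 / δ * Metric.infDist x (A i)) - (1 - 2 / δ * Metric.infDist y (A i)) by ring]
          exact h1
      _ = 2 / δ * |Metric.infDist y (A i) - Metric.infDist x (A i)| := by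
          rw [abs_mul, abs_of_pos hδ2]
      _ ≤ 2 / δ * dist x y := by
          rw [abs_sub_comm]
          exact mul_le_mul_of_nonneg_left h2 hδ2.le
  -- value of a combination at a point close to some `A i`
  have hsum : ∀ (c : Fin (k + 1) → ℝ) (x : X) (i : Fin (k + 1)),
      Metric.infDist x (A i) < δ / 2 → ∑ j, c j * F j x = c i * F i x := by
    intro c x i hi
    apply Finset.sum_eq_single
    · intro j _ hji
      rw [hFz j x (hfar i j (Ne.symm hji) x hi), mul_zero]
    · intro h; exact absurd (Finset.mem_univ i) h
  have hzero : ∀ (c : Fin (k + 1) → ℝ) (x : X),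
      (∀ i, δ / 2 ≤ Metric.infDist x (A i)) → ∑ j, c j * F j x = 0 := by
    intro c x hx
    apply Finset.sum_eq_zero
    intro j _
    rw [hFz j x (hx j), mul_zero]
  -- the global Lipschitz bound for combinations
  have hlipS : ∀ c : Fin (k + 1) → ℝ, ∀ x y : X,
      |(∑ i, c i * F i x) - ∑ i, c i * F i y| ≤
        2 / δ * Real.sqrt (∑ i, c i ^ 2) * dist x y := by
    intro c
    set m := Real.sqrt (∑ i, c i ^ 2) with hm
    have hm0 : 0 ≤ m := Real.sqrt_nonneg _
    have hcle : ∀ i, |c i| ≤ m := by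
      intro i
      rw [hm, show |c i| = Real.sqrt ((c i) ^ 2) by rw [Real.sqrt_sq_eq_abs]]
      apply Real.sqrt_le_sqrt
      exact Finset.single_le_sum (fun j _ => sq_nonneg (c j)) (Finset.mem_univ i)
    -- the asymmetric case: x close to A i, y far from everything
    have hcase2 : ∀ x y : X, ∀ i, Metric.infDist x (A i) < δ / 2 →
        (∀ j, δ / 2 ≤ Metric.infDist y (A j)) →
        |(∑ j, c j * F j x) - ∑ j, c j * F j y| ≤ 2 / δ * m * dist x y := by
      intro x y i hi hy
      rw [hsum c x i hi, hzero c y hy, sub_zero]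
      have hFy : F i y = 0 := hFz i y (hy i)
      calc |c i * F i x| = |c i| * |F i x - F i y| := by
            rw [hFy, sub_zero, abs_mul, abs_of_nonneg (hF0 i x)]
        _ ≤ m * (2 / δ * dist x y) :=
            mul_le_mul (hcle i) (hFlip i x y) (abs_nonneg _) hm0
        _ = 2 / δ * m * dist x y := by ring
    intro x y
    by_cases hx : ∃ i, Metric.infDist x (A i) < δ / 2
    · obtain ⟨i, hi⟩ := hx
      by_cases hy : ∃ j, Metric.infDist y (A j) < δ / 2
      · obtain ⟨j, hj⟩ := hy
        by_cases hij : i = j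
        · subst hij
          rw [hsum c x i hi, hsum c y i hj, ← mul_sub, abs_mul]
          calc |c i| * |F i x - F i y| ≤ m * (2 / δ * dist x y) :=
                mul_le_mul (hcle i) (hFlip i x y) (abs_nonneg _) hm0
            _ = 2 / δ * m * dist x y := by ring
        · -- the interesting case
          set a := Metric.infDist x (A i) with ha
          set b := Metric.infDist y (A j) with hb
          have ha0 : 0 ≤ a := Metric.infDist_nonneg
          have hb0 : 0 ≤ b := Metric.infDist_nonneg
          have hd : δ - a - b ≤ dist x y := by
            by_contra hcon
            push_neg at hcon
            set ε := (δ - a - b - dist x y) / 2 with hε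
            have hεpos : 0 < ε := by rw [hε]; linarith
            obtain ⟨p, hp, hpd⟩ := (Metric.infDist_lt_iff (hne i)).1
              (show Metric.infDist x (A i) < a + ε by rw [← ha]; linarith)
            obtain ⟨q, hq, hqd⟩ := (Metric.infDist_lt_iff (hne j)).1
              (show Metric.infDist y (A j) < b + ε by rw [← hb]; linarith)
            have h1 := hdist i j hij p hp q hq
            have h2 : dist p q ≤ dist p x + dist x y + dist y q :=
              (dist_triangle p x q).trans (by
                have := dist_triangle x y q
                linarith)
            have h3 : dist p x = dist x p := dist_comm p x
            have h4 : dist y q = dist y q := rfl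
            linarith
          have hFx : F i x = 1 - 2 / δ * a := by
            apply max_eq_left
            have h1 : 2 / δ * a ≤ 2 / δ * (δ / 2) := mul_le_mul_of_nonneg_left hi.le hδ2.le
            have h2 : 2 / δ * (δ / 2) = 1 := by field_simp
            linarith
          have hFy : F j y = 1 - 2 / δ * b := by
            apply max_eq_left
            have h1 : 2 / δ * b ≤ 2 / δ * (δ / 2) := mul_le_mul_of_nonneg_left hj.le hδ2.le
            have h2 : 2 / δ * (δ / 2) = 1 := by field_simp
            linarith
          rw [hsum c x i hi, hsum c y j hj]
          have h3 : |c i * F i x - c j * F j y| ≤ m * (F i x + F j y) := by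
            calc |c i * F i x - c j * F j y| ≤ |c i * F i x| + |c j * F j y| := by
                  rw [sub_eq_add_neg]
                  refine (abs_add_le _ _).trans ?_
                  rw [abs_neg]
              _ = |c i| * F i x + |c j| * F j y := by
                  rw [abs_mul, abs_mul, abs_of_nonneg (hF0 i x), abs_of_nonneg (hF0 j y)]
              _ ≤ m * F i x + m * F j y :=
                  add_le_add (mul_le_mul_of_nonneg_right (hcle i) (hF0 i x))
                    (mul_le_mul_of_nonneg_right (hcle j) (hF0 j y))
              _ = m * (F i x + F j y) := by ring
          have h4 : F i x + F j y = 2 / δ * (δ - a - b) := by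
            rw [hFx, hFy]; field_simp; ring
          calc |c i * F i x - c j * F j y| ≤ m * (F i x + F j y) := h3
            _ = m * (2 / δ * (δ - a - b)) := by rw [h4]
            _ ≤ m * (2 / δ * dist x y) := by
                apply mul_le_mul_of_nonneg_left _ hm0
                exact mul_le_mul_of_nonneg_left hd hδ2.le
            _ = 2 / δ * m * dist x y := by ring
      · push_neg at hy
        exact hcase2 x y i hi hy
    · push_neg at hx
      by_cases hy : ∃ j, Metric.infDist y (A j) < δ / 2
      · obtain ⟨j, hj⟩ := hy
        rw [abs_sub_comm]
        rw [show (2:ℝ) / δ * m * dist x y = 2 / δ * m * dist y x by rw [dist_comm]]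
        exact hcase2 y x j hj hx
      · push_neg at hy
        rw [hzero c x hx, hzero c y hy, sub_zero, abs_zero]
        positivity
  -- lower bound on the L² norm of combinations
  have hI : ∀ c : Fin (k + 1) → ℝ,
      κm * ∑ i, c i ^ 2 ≤ ∫ x, (∑ i, c i * F i x) ^ 2 ∂μ := by
    intro c
    set S : X → ℝ := fun x => ∑ i, c i * F i x with hSdef
    have hScont : Continuous S := by
      apply continuous_finset_sum
      intro i _
      exact continuous_const.mul (hFcont i)
    set g : X → ℝ := fun x => ∑ i, Set.indicator (A i) (fun _ => c i ^ 2) x with hg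
    have hgle : ∀ x, g x ≤ S x ^ 2 := by
      intro x
      by_cases hx : ∃ i, x ∈ A i
      · obtain ⟨i, hi⟩ := hx
        have hclose : Metric.infDist x (A i) < δ / 2 := by
          rw [Metric.infDist_zero_of_mem hi]; linarith
        have hgx : g x = c i ^ 2 := by
          show (∑ j, Set.indicator (A j) (fun _ => c j ^ 2) x) = c i ^ 2
          have h0 : ∀ j ∈ Finset.univ, j ≠ i →
              Set.indicator (A j) (fun _ => c j ^ 2) x = 0 := by
            intro j _ hji
            apply Set.indicator_of_notMem
            intro hj
            have := hfar i j (Ne.symm hji) x hclose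
            rw [Metric.infDist_zero_of_mem hj] at this
            linarith
          have h1 := Finset.sum_eq_single_of_mem i (Finset.mem_univ i) h0
          rw [h1]
          exact Set.indicator_of_mem hi _
        have hSx : S x = c i := by
          rw [hSdef]
          simp only
          rw [hsum c x i hclose, hFone i x hi, mul_one]
        rw [hgx, hSx]
      · push_neg at hx
        have hgx : g x = 0 := by
          show (∑ j, Set.indicator (A j) (fun _ => c j ^ 2) x) = 0
          apply Finset.sum_eq_zero
          intro j _
          exact Set.indicator_of_notMem (hx j) _
        rw [hgx]
        exact sq_nonneg _
    have hgint : Integrable g μ := by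
      apply integrable_finset_sum
      intro i _
      exact (integrable_const _).indicator (hmeas i)
    have hSint : Integrable (fun x => S x ^ 2) μ :=
      memLp_one_iff_integrable.1 (memLp_of_continuous μ 1 (hScont.pow 2))
    have h1 : ∫ x, g x ∂μ ≤ ∫ x, S x ^ 2 ∂μ := integral_mono hgint hSint hgle
    have h2 : ∫ x, g x ∂μ = ∑ i, (μ (A i)).toReal * c i ^ 2 := by
      rw [hg, integral_finset_sum]
      · congr 1
        funext i
        rw [integral_indicator_const _ (hmeas i)]
        simp [mul_comm, measureReal_def]
      · intro i _
        exact (integrable_const _).indicator (hmeas i)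
    have h3 : κm * ∑ i, c i ^ 2 ≤ ∑ i, (μ (A i)).toReal * c i ^ 2 := by
      rw [Finset.mul_sum]
      apply Finset.sum_le_sum
      intro i _
      apply mul_le_mul_of_nonneg_right _ (sq_nonneg _)
      have h4 : κ i ≤ (μ (A i)).toReal :=
        (ENNReal.ofReal_le_iff_le_toReal (measure_ne_top μ _)).1 (hAκ i)
      linarith [hκm_le i]
    linarith
  -- linear independence and the span
  have hli : LinearIndependent ℝ F := by
    rw [Fintype.linearIndependent_iff]
    intro g hg i
    obtain ⟨a, ha⟩ := hne i
    have h1 := congrFun hg a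
    rw [Finset.sum_apply] at h1
    simp only [Pi.smul_apply, smul_eq_mul, Pi.zero_apply] at h1
    have hclose : Metric.infDist a (A i) < δ / 2 := by
      rw [Metric.infDist_zero_of_mem ha]; linarith
    rw [hsum g a i hclose, hFone i a ha, mul_one] at h1
    exact h1
  set L := Submodule.span ℝ (Set.range F) with hL
  have hrank : Module.finrank ℝ L = k + 1 := by
    rw [hL, finrank_span_eq_card hli, Fintype.card_fin]
  have hmem : ∀ f ∈ L, (∃ C : NNReal, LipschitzWith C f) ∧ MemLp f 2 μ := by
    intro f hf
    obtain ⟨c, hc⟩ := (Submodule.mem_span_range_iff_exists_fun ℝ).1 hf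
    have hfx : ∀ x, f x = ∑ i, c i * F i x := by
      intro x
      rw [← hc, Finset.sum_apply]
      simp
    set K := 2 / δ * Real.sqrt (∑ i, c i ^ 2) with hK
    have hK0 : 0 ≤ K := by positivity
    have hlipf : ∀ x y, |f x - f y| ≤ K * dist x y := by
      intro x y
      rw [hfx x, hfx y]
      exact hlipS c x y
    constructor
    · refine ⟨Real.toNNReal K, LipschitzWith.of_dist_le_mul fun x y => ?_⟩
      rw [Real.dist_eq, Real.coe_toNNReal K hK0]
      exact hlipf x y
    · apply memLp_of_continuous
      have hc2 : Continuous fun x => ∑ i, c i * F i x := by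
        apply continuous_finset_sum
        intro i _
        exact continuous_const.mul (hFcont i)
      have : f = fun x => ∑ i, c i * F i x := funext hfx
      rw [this]
      exact hc2
  -- the Rayleigh quotient bound on L
  have hray : ∀ f ∈ L, f ≠ (0 : X → ℝ) → rayleigh μ f ≤ 4 / (δ ^ 2 * κm) := by
    intro f hf hf0
    obtain ⟨c, hc⟩ := (Submodule.mem_span_range_iff_exists_fun ℝ).1 hf
    have hfx : ∀ x, f x = ∑ i, c i * F i x := by
      intro x
      rw [← hc, Finset.sum_apply]
      simp
    have hcne : c ≠ 0 := by
      rintro rfl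
      apply hf0
      funext x
      rw [hfx x]
      simp
    obtain ⟨i₀, hi₀⟩ := Function.ne_iff.1 hcne
    have hsumsq : 0 < ∑ i, c i ^ 2 := by
      have h1 : c i₀ ^ 2 ≤ ∑ i, c i ^ 2 :=
        Finset.single_le_sum (fun j _ => sq_nonneg (c j)) (Finset.mem_univ i₀)
      have h2 : 0 < c i₀ ^ 2 := sq_pos_of_ne_zero hi₀
      linarith
    set K := 2 / δ * Real.sqrt (∑ i, c i ^ 2) with hK
    have hK0 : 0 ≤ K := by positivity
    have hE : energy μ f ≤ 4 / δ ^ 2 * ∑ i, c i ^ 2 := by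
      have h1 : energy μ f ≤ K ^ 2 := by
        apply energy_le_sq μ hK0
        intro x y
        rw [hfx x, hfx y]
        exact hlipS c x y
      have h2 : K ^ 2 = 4 / δ ^ 2 * ∑ i, c i ^ 2 := by
        rw [hK, mul_pow, Real.sq_sqrt (Finset.sum_nonneg fun j _ => sq_nonneg (c j))]
        ring
      linarith
    have hIf : κm * ∑ i, c i ^ 2 ≤ ∫ x, f x ^ 2 ∂μ := by
      have := hI c
      have heq : (∫ x, f x ^ 2 ∂μ) = ∫ x, (∑ i, c i * F i x) ^ 2 ∂μ := by
        congr 1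
        funext x
        rw [hfx x]
      rw [heq]
      exact this
    have hIpos : 0 < ∫ x, f x ^ 2 ∂μ := lt_of_lt_of_le (mul_pos hκm hsumsq) hIf
    rw [rayleigh, div_le_iff₀ hIpos]
    calc energy μ f ≤ 4 / δ ^ 2 * ∑ i, c i ^ 2 := hE
      _ = 4 / (δ ^ 2 * κm) * (κm * ∑ i, c i ^ 2) := by field_simp
      _ ≤ 4 / (δ ^ 2 * κm) * ∫ x, f x ^ 2 ∂μ := by
          apply mul_le_mul_of_nonneg_left hIf
          positivity
  -- conclude via the inf
  have hmemset : sSup { s : ℝ | ∃ f ∈ L, f ≠ (0 : X → ℝ) ∧ s = rayleigh μ f } ∈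
      { r : ℝ | ∃ L' : Submodule ℝ (X → ℝ),
        Module.finrank ℝ L' = k + 1 ∧
        (∀ f ∈ L', (∃ C : NNReal, LipschitzWith C f) ∧ MemLp f 2 μ) ∧
        r = sSup { s : ℝ | ∃ f ∈ L', f ≠ (0 : X → ℝ) ∧ s = rayleigh μ f } } :=
    ⟨L, hrank, hmem, rfl⟩
  have hbdd : BddBelow { r : ℝ | ∃ L' : Submodule ℝ (X → ℝ),
      Module.finrank ℝ L' = k + 1 ∧
      (∀ f ∈ L', (∃ C : NNReal, LipschitzWith C f) ∧ MemLp f 2 μ) ∧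
      r = sSup { s : ℝ | ∃ f ∈ L', f ≠ (0 : X → ℝ) ∧ s = rayleigh μ f } } := by
    refine ⟨0, ?_⟩
    rintro r ⟨L', -, -, rfl⟩
    apply Real.sSup_nonneg
    rintro s ⟨f, -, -, rfl⟩
    exact div_nonneg (integral_nonneg fun x => sq_nonneg _)
      (integral_nonneg fun x => sq_nonneg _)
  calc lambdaK μ k ≤ sSup { s : ℝ | ∃ f ∈ L, f ≠ (0 : X → ℝ) ∧ s = rayleigh μ f } :=
        csInf_le hbdd hmemset
    _ ≤ 4 / (δ ^ 2 * κm) := by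
        apply Real.sSup_le
        · rintro s ⟨f, hf, hf0, rfl⟩
          exact hray f hf hf0
        · positivity

end Aux

/-- for a compact Riemannian manifold `X` with normalized volume
measure (formalized as a compact metric measure space, with `λ_k` given by the
min-max principle as in the source), and any `κ₀, …, κ_k > 0`,
`Sep(X; κ₀, …, κ_k) ≤ 2 / √(λ_k(X) · min_i κ_i)`. -/
theorem sep_le_two_div_sqrt_lambdaK {X : Type*}
    [MetricSpace X] [CompactSpace X] [MeasurableSpace X] [BorelSpace X]
    (μ : Measure X) [IsProbabilityMeasure μ] [μ.IsOpenPosMeasure]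
    (k : ℕ) (κ : Fin (k + 1) → ℝ) (hκ : ∀ i, 0 < κ i) :
    sepFam μ κ ≤ (2 : ℝ≥0∞) / ENNReal.ofReal (Real.sqrt (lambdaK μ k * ⨅ i, κ i)) := by
  set κm : ℝ := ⨅ i, κ i with hκmdef
  have hκm_le : ∀ i, κm ≤ κ i := fun i =>
    ciInf_le (Set.Finite.bddBelow (Set.finite_range κ)) i
  have hκm_pos : 0 < κm := by
    obtain ⟨i₀, hi₀⟩ := exists_eq_ciInf_of_finite (f := κ)
    rw [hκmdef, ← hi₀]
    exact hκ i₀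
  set s : ℝ := Real.sqrt (lambdaK μ k * κm) with hs
  refine iSup_le fun A => iSup_le fun hmeas => iSup_le fun hAκ => ?_
  rcases eq_or_lt_of_le (Real.sqrt_nonneg (lambdaK μ k * κm)) with hs0 | hs0
  · rw [hs, ← hs0, ENNReal.ofReal_zero, ENNReal.div_zero two_ne_zero]
    exact le_top
  rw [← hs] at hs0
  by_contra hcon
  push_neg at hcon
  have h2s : ENNReal.ofReal (2 / s) = 2 / ENNReal.ofReal s := by
    rw [ENNReal.ofReal_div_of_pos hs0, ENNReal.ofReal_ofNat]
  rw [← h2s] at hcon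
  obtain ⟨δ, hδ0, hδ1, hδ2⟩ := ENNReal.lt_iff_exists_real_btwn.1 hcon
  have hδgt : 2 / s < δ := by
    rwa [ENNReal.ofReal_lt_ofReal_iff_of_nonneg (by positivity)] at hδ1
  have hδpos : 0 < δ := lt_trans (by positivity) hδgt
  have hsepA : ∀ i j, i ≠ j → ENNReal.ofReal δ ≤ setSep (A i) (A j) := by
    intro i j hij
    refine le_trans hδ2.le ?_
    apply iInf_le_of_le i
    apply iInf_le_of_le j
    exact iInf_le _ hij
  have hmain := lambdaK_le_of_sep μ k κ hκ κm hκm_pos hκm_le A hmeas hAκ δ hδpos hsepA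
  have hlam0 : 0 ≤ lambdaK μ k := lambdaK_nonneg μ k
  have hprod : lambdaK μ k * κm ≤ 4 / δ ^ 2 := by
    have h1 : lambdaK μ k * κm ≤ 4 / (δ ^ 2 * κm) * κm :=
      mul_le_mul_of_nonneg_right hmain hκm_pos.le
    have h2 : 4 / (δ ^ 2 * κm) * κm = 4 / δ ^ 2 := by
      field_simp
    linarith
  have hs2 : s ^ 2 = lambdaK μ k * κm := Real.sq_sqrt (mul_nonneg hlam0 hκm_pos.le)
  have hsle : s ≤ 2 / δ := by
    have h1 : s ^ 2 ≤ (2 / δ) ^ 2 := by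
      rw [hs2]
      calc lambdaK μ k * κm ≤ 4 / δ ^ 2 := hprod
        _ = (2 / δ) ^ 2 := by rw [div_pow]; norm_num
    calc s = Real.sqrt (s ^ 2) := (Real.sqrt_sq hs0.le).symm
      _ ≤ Real.sqrt ((2 / δ) ^ 2) := Real.sqrt_le_sqrt h1
      _ = 2 / δ := Real.sqrt_sq (by positivity)
  have h1 : 2 < δ * s := by
    rw [div_lt_iff₀ hs0] at hδgt
    linarith
  have h2 : s * δ ≤ 2 := by
    rw [le_div_iff₀ hδpos] at hsle
    linarith
  nlinarith
end

section
/- Let X and Y be compact metric spaces. If K_N(X) = K_N(Y) for every natural number N, then X and Y are isometric. -/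
/-- The set of distance matrices of order `N` of a metric space `X`. -/
def distMatrixSet (X : Type*) [MetricSpace X] (N : ℕ) : Set (Fin N → Fin N → ℝ) :=
  { M | ∃ x : Fin N → X, M = fun i j => dist (x i) (x j) }

lemma isometry_iterate {Z : Type*} [MetricSpace Z] {f : Z → Z} (hf : Isometry f) (k : ℕ) :
    Isometry f^[k] := by
  induction k with
  | zero => simpa using isometry_id
  | succ n ih => rw [Function.iterate_succ]; exact ih.comp hf

lemma isometry_surjective_of_compact {Z : Type*} [MetricSpace Z] [CompactSpace Z]
    {f : Z → Z} (hf : Isometry f) : Function.Surjective f := by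
  intro y
  by_contra hy
  have hcl : IsClosed (Set.range f) := (isCompact_range hf.continuous).isClosed
  have hne : (Set.range f).Nonempty := ⟨f y, Set.mem_range_self y⟩
  have hpos : 0 < Metric.infDist y (Set.range f) :=
    (hcl.notMem_iff_infDist_pos hne).1 (by simpa using hy)
  set ε := Metric.infDist y (Set.range f) with hε
  set a : ℕ → Z := fun n => f^[n] y with ha
  have key : ∀ m n : ℕ, m < n → ε ≤ dist (a m) (a n) := by
    intro m n hmn
    have h1 : a n = f^[m] (f^[n - m] y) := by
      rw [ha]; simp only
      rw [← Function.iterate_add_apply]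
      congr 1
      omega
    have h2 : dist (a m) (a n) = dist y (f^[n - m] y) := by
      rw [h1, ha]; simp only
      exact (isometry_iterate hf m).dist_eq _ _
    rw [h2]
    have hmem : f^[n - m] y ∈ Set.range f := by
      obtain ⟨k, hk⟩ : ∃ k, n - m = k + 1 := ⟨n - m - 1, by omega⟩
      rw [hk, Function.iterate_succ_apply']
      exact Set.mem_range_self _
    exact Metric.infDist_le_dist_of_mem hmem
  obtain ⟨x, φ, hφ, hx⟩ := CompactSpace.tendsto_subseq a
  rw [Metric.tendsto_atTop] at hx
  obtain ⟨N, hN⟩ := hx (ε / 2) (by linarith)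
  have h1 := hN N le_rfl
  have h2 := hN (N + 1) (by omega)
  have h3 := key (φ N) (φ (N + 1)) (hφ (by omega))
  simp only [Function.comp] at h1 h2
  have := dist_triangle (a (φ N)) x (a (φ (N + 1)))
  rw [dist_comm x (a (φ (N + 1)))] at this
  linarith

/-- If every distance matrix of `X` is a distance matrix of `Y`, and `Y` is nonempty and
compact, then there is an isometric embedding of `X` into `Y`. -/
lemma exists_isometry_of_distMatrixSet_subset (X Y : Type*)
    [MetricSpace X] [CompactSpace X] [MetricSpace Y] [CompactSpace Y] [Nonempty Y]
    (h : ∀ N : ℕ, distMatrixSet X N ⊆ distMatrixSet Y N) :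
    ∃ f : X → Y, Isometry f := by
  rcases isEmpty_or_nonempty X with hX | hX
  · exact ⟨fun x => (IsEmpty.false x).elim, fun x => (IsEmpty.false x).elim⟩
  -- dense sequence in X
  obtain ⟨u, hu⟩ := TopologicalSpace.exists_dense_seq X
  -- for each N, a tuple in Y with the same distance matrix as (u 0, ..., u (N-1))
  have hy : ∀ N : ℕ, ∃ y : Fin N → Y, ∀ i j : Fin N,
      dist (y i) (y j) = dist (u i) (u j) := by
    intro N
    obtain ⟨y, hy⟩ := h N ⟨fun i => u i, rfl⟩
    exact ⟨y, fun i j => by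
      have := congrFun (congrFun hy i) j
      exact this.symm⟩
  choose y hy using hy
  set z : ℕ → ℕ → Y := fun N i => if hi : i < N then y N ⟨i, hi⟩ else Classical.arbitrary Y
    with hz
  -- an ultrafilter extending atTop on ℕ
  set U : Ultrafilter ℕ := Ultrafilter.of Filter.atTop with hU
  have hUle : (U : Filter ℕ) ≤ Filter.atTop := Ultrafilter.of_le _
  -- limit along U
  set v : ℕ → Y := fun i => (U.map (fun N => z N i)).lim with hv
  have hvt : ∀ i : ℕ, Filter.Tendsto (fun N => z N i) U (nhds (v i)) := fun i =>
    (U.map (fun N => z N i)).le_nhds_lim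
  have hvd : ∀ i j : ℕ, dist (v i) (v j) = dist (u i) (u j) := by
    intro i j
    have h1 : Filter.Tendsto (fun N => dist (z N i) (z N j)) U (nhds (dist (v i) (v j))) :=
      (hvt i).dist (hvt j)
    have h2 : ∀ᶠ N in (U : Filter ℕ), dist (z N i) (z N j) = dist (u i) (u j) := by
      apply hUle
      filter_upwards [Filter.eventually_ge_atTop (max i j + 1)] with N hN
      have hi : i < N := by omega
      have hj : j < N := by omega
      simp only [hz, dif_pos hi, dif_pos hj]
      exact hy N ⟨i, hi⟩ ⟨j, hj⟩
    have h3 : Filter.Tendsto (fun N => dist (z N i) (z N j)) U (nhds (dist (u i) (u j))) :=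
      Filter.Tendsto.congr' (Filter.EventuallyEq.symm h2) tendsto_const_nhds
    exact tendsto_nhds_unique h1 h3
  -- approximation indices: for each x and k, an index with dist (u _) x < 1/(k+1)
  have happ : ∀ (x : X) (k : ℕ), ∃ i : ℕ, dist (u i) x < 1 / (k + 1) := by
    intro x k
    have : (0 : ℝ) < 1 / (k + 1) := by positivity
    obtain ⟨i, hi⟩ := Metric.denseRange_iff.1 hu x _ this
    exact ⟨i, by rwa [dist_comm]⟩
  choose φ hφ using happ
  have hux : ∀ x : X, Filter.Tendsto (fun k => u (φ x k)) Filter.atTop (nhds x) := by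
    intro x
    rw [Metric.tendsto_atTop]
    intro ε hε
    obtain ⟨K, hK⟩ := exists_nat_gt (1 / ε)
    refine ⟨K, fun k hk => lt_of_lt_of_le (hφ x k) ?_⟩
    rw [div_le_iff₀ (by positivity)]
    rw [div_lt_iff₀ hε] at hK
    nlinarith [hK, hε.le, (Nat.cast_le (α := ℝ)).2 hk]
  -- define f by another ultrafilter limit
  set f : X → Y := fun x => ((Ultrafilter.of Filter.atTop).map (fun k => v (φ x k))).lim
    with hf
  have hft : ∀ x : X, Filter.Tendsto (fun k => v (φ x k))
      (↑(Ultrafilter.of (Filter.atTop : Filter ℕ)) : Filter ℕ)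
      (nhds (f x)) := fun x =>
    ((Ultrafilter.of (Filter.atTop : Filter ℕ)).map (fun k => v (φ x k))).le_nhds_lim
  refine ⟨f, Isometry.of_dist_eq fun x x' => ?_⟩
  have h1 : Filter.Tendsto (fun k => dist (v (φ x k)) (v (φ x' k)))
      (↑(Ultrafilter.of (Filter.atTop : Filter ℕ)) : Filter ℕ)
      (nhds (dist (f x) (f x'))) := (hft x).dist (hft x')
  have h2 : Filter.Tendsto (fun k => dist (u (φ x k)) (u (φ x' k))) Filter.atTop
      (nhds (dist x x')) := (hux x).dist (hux x')
  have h3 : Filter.Tendsto (fun k => dist (v (φ x k)) (v (φ x' k)))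
      (↑(Ultrafilter.of (Filter.atTop : Filter ℕ)) : Filter ℕ) (nhds (dist x x')) := by
    have := h2.mono_left (Ultrafilter.of_le (Filter.atTop : Filter ℕ))
    exact this.congr (fun k => (hvd (φ x k) (φ x' k)).symm)
  exact tendsto_nhds_unique h1 h3

/-- if two compact metric spaces have the same distance matrix sets
of every order `N`, then they are isometric. -/
theorem isometric_of_distMatrixSet_eq (X Y : Type*)
    [MetricSpace X] [CompactSpace X] [MetricSpace Y] [CompactSpace Y]
    (h : ∀ N : ℕ, distMatrixSet X N = distMatrixSet Y N) :
    Nonempty (X ≃ᵢ Y) := by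
  rcases isEmpty_or_nonempty X with hX | hX
  · have hY : IsEmpty Y := by
      by_contra hY
      rw [not_isEmpty_iff] at hY
      obtain ⟨x, -⟩ : ∃ x : Fin 1 → X, _ := by
        have : (fun (_ _ : Fin 1) => dist (Classical.arbitrary Y) (Classical.arbitrary Y))
            ∈ distMatrixSet Y 1 := ⟨fun _ => Classical.arbitrary Y, rfl⟩
        rw [← h 1] at this
        exact this
      exact IsEmpty.false (x 0)
    exact ⟨⟨Equiv.equivOfIsEmpty X Y, fun x => (IsEmpty.false x).elim⟩⟩
  have hY : Nonempty Y := by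
    have : (fun (_ _ : Fin 1) => dist (Classical.arbitrary X) (Classical.arbitrary X))
        ∈ distMatrixSet X 1 := ⟨fun _ => Classical.arbitrary X, rfl⟩
    rw [h 1] at this
    obtain ⟨y, -⟩ := this
    exact ⟨y 0⟩
  obtain ⟨f, hf⟩ := exists_isometry_of_distMatrixSet_subset X Y (fun N => (h N).le)
  obtain ⟨g, hg⟩ := exists_isometry_of_distMatrixSet_subset Y X (fun N => (h N).ge)
  have hgf : Function.Surjective (g ∘ f) := isometry_surjective_of_compact (hg.comp hf)
  have hgs : Function.Surjective g := fun x => by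
    obtain ⟨x', hx'⟩ := hgf x; exact ⟨f x', hx'⟩
  have hgb : Function.Bijective g := ⟨hg.injective, hgs⟩
  exact ⟨(⟨Equiv.ofBijective g hgb, hg⟩ : Y ≃ᵢ X).symm⟩
end

section
/- Let X and Y be metric spaces, f : X → Y a Borel measurable map, μ and ν Borel probability measures on X, and ε > 0. Suppose there is a Borel set X₀ ⊂ X with μ(X₀) ≥ 1−ε, ν(X₀) ≥ 1−ε, and d_Y(f(x),f(y)) ≤ d_X(x,y) + ε for all x,y ∈ X₀. Then d_P(f_*μ, f_*ν) ≤ d_P(μ, ν) + 2ε. -/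
open MeasureTheory
open scoped ENNReal

/-- if `f : X → Y` is Borel measurable and `1`-Lipschitz up to an
additive error `ε` on a set of `μ`- and `ν`-measure at least `1 − ε`, then
`d_P(f_*μ, f_*ν) ≤ d_P(μ, ν) + 2ε`. -/
theorem prohorovDist_map_le {X Y : Type*}
    [MetricSpace X] [MeasurableSpace X] [BorelSpace X]
    [MetricSpace Y] [MeasurableSpace Y] [BorelSpace Y]
    (f : X → Y) (hf : Measurable f) (μ ν : Measure X)
    [IsProbabilityMeasure μ] [IsProbabilityMeasure ν]
    (ε : ℝ) (hε : 0 < ε)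
    (X₀ : Set X) (hX₀ : MeasurableSet X₀)
    (hμX₀ : ENNReal.ofReal (1 - ε) ≤ μ X₀)
    (hνX₀ : ENNReal.ofReal (1 - ε) ≤ ν X₀)
    (hlip : ∀ x ∈ X₀, ∀ y ∈ X₀, dist (f x) (f y) ≤ dist x y + ε) :
    prohorovDist (Measure.map f μ) (Measure.map f ν) ≤ prohorovDist μ ν + 2 * ε := by
  have hcompl : ∀ (m : Measure X), IsProbabilityMeasure m →
      ENNReal.ofReal (1 - ε) ≤ m X₀ → m X₀ᶜ ≤ ENNReal.ofReal ε := by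
    intro m hm h
    rw [prob_compl_eq_one_sub hX₀, tsub_le_iff_right]
    calc (1 : ℝ≥0∞) = ENNReal.ofReal (ε + (1 - ε)) := by norm_num
      _ ≤ ENNReal.ofReal ε + ENNReal.ofReal (1 - ε) := ENNReal.ofReal_add_le
      _ ≤ ENNReal.ofReal ε + m X₀ := add_le_add_right h _
  have hμc : μ X₀ᶜ ≤ ENNReal.ofReal ε := hcompl μ inferInstance hμX₀
  have hνc : ν X₀ᶜ ≤ ENNReal.ofReal ε := hcompl ν inferInstance hνX₀
  have hS1 : (1 : ℝ) ∈ {δ : ℝ | 0 < δ ∧ ∀ A : Set X, MeasurableSet A →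
      ν A ≤ μ (Metric.thickening δ A) + ENNReal.ofReal δ} := by
    refine ⟨one_pos, fun A hA => ?_⟩
    calc ν A ≤ 1 := prob_le_one
      _ = ENNReal.ofReal 1 := by simp
      _ ≤ μ (Metric.thickening 1 A) + ENNReal.ofReal 1 := le_add_self
  have key : ∀ δ : ℝ, (0 < δ ∧ ∀ A : Set X, MeasurableSet A →
      ν A ≤ μ (Metric.thickening δ A) + ENNReal.ofReal δ) →
      prohorovDist (Measure.map f μ) (Measure.map f ν) ≤ δ + 2 * ε := by
    rintro δ ⟨hδ, hδ'⟩
    apply csInf_le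
    · exact ⟨0, fun x hx => hx.1.le⟩
    refine ⟨by linarith, fun B hB => ?_⟩
    rw [Measure.map_apply hf hB,
      Measure.map_apply hf Metric.isOpen_thickening.measurableSet]
    set A := f ⁻¹' B ∩ X₀ with hAdef
    have hAm : MeasurableSet A := (hf hB).inter hX₀
    have hsub : Metric.thickening δ A ∩ X₀ ⊆ f ⁻¹' Metric.thickening (δ + 2 * ε) B := by
      rintro x ⟨hx, hx0⟩
      rw [Metric.mem_thickening_iff] at hx
      obtain ⟨a, ⟨haB, haX₀⟩, hd⟩ := hx
      rw [Set.mem_preimage, Metric.mem_thickening_iff]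
      exact ⟨f a, haB, lt_of_le_of_lt (hlip x hx0 a haX₀) (by linarith)⟩
    have h1 : ν (f ⁻¹' B) ≤ ν A + ν X₀ᶜ := by
      refine le_trans (measure_mono ?_) (measure_union_le _ _)
      intro x hx
      by_cases h : x ∈ X₀
      · exact Or.inl ⟨hx, h⟩
      · exact Or.inr h
    have h2 : μ (Metric.thickening δ A) ≤ μ (f ⁻¹' Metric.thickening (δ + 2 * ε) B) + μ X₀ᶜ := by
      refine le_trans (measure_mono ?_) ((measure_union_le _ _).trans
        (add_le_add_left (measure_mono hsub) _))
      intro x hx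
      by_cases h : x ∈ X₀
      · exact Or.inl ⟨hx, h⟩
      · exact Or.inr h
    have hofr : ENNReal.ofReal (δ + 2 * ε)
        = ENNReal.ofReal δ + ENNReal.ofReal ε + ENNReal.ofReal ε := by
      rw [← ENNReal.ofReal_add hδ.le hε.le, ← ENNReal.ofReal_add (by linarith) hε.le]
      ring_nf
    calc ν (f ⁻¹' B) ≤ ν A + ν X₀ᶜ := h1
      _ ≤ (μ (Metric.thickening δ A) + ENNReal.ofReal δ) + ENNReal.ofReal ε :=
        add_le_add (hδ' A hAm) hνc
      _ ≤ ((μ (f ⁻¹' Metric.thickening (δ + 2 * ε) B) + μ X₀ᶜ) + ENNReal.ofReal δ)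
          + ENNReal.ofReal ε := by gcongr
      _ ≤ ((μ (f ⁻¹' Metric.thickening (δ + 2 * ε) B) + ENNReal.ofReal ε) + ENNReal.ofReal δ)
          + ENNReal.ofReal ε := by gcongr
      _ = μ (f ⁻¹' Metric.thickening (δ + 2 * ε) B) + ENNReal.ofReal (δ + 2 * ε) := by
        rw [hofr]; ring
  have hfinal : prohorovDist (Measure.map f μ) (Measure.map f ν) - 2 * ε ≤ prohorovDist μ ν :=
    le_csInf ⟨1, hS1⟩ (fun δ hδ => sub_le_iff_le_add.mpr (key δ hδ))
  linarith
end
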